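/- arXiv:1911.01065 — 3 statements merged into one kernel-verified Lean document; each statement's English description precedes it below -/
import Mathlib

section
/- Let H be an n×n symmetric positive definite matrix and let X = (X_t)_{t∈ℝ} be a centred, square-integrable strictly stationary n-dimensional process with continuous paths almost surely, with autocovariance γ(t) = E[X_t X_0ᵀ] (so E[X_t X_sᵀ] = γ(t−s)). Define G = (G_t)_{t∈ℝ} by G_t = X_t − X_0 + H ∫_0^t X_s ds (pathwise Riemann integral, with the usual sign convention for t < 0), and for δ > 0 define Δ_t^δ G = G_t − G_{t−δ} and r_δ(t) = E[(Δ_t^δ G)(Δ_0^δ G)ᵀ]. Then for every t ∈ ℝ and δ > 0: r_δ(t) = 2γ(t) − γ(t+δ) − γ(t−δ) + (∫_t^{t+δ} γ(s) ds − ∫_{t−δ}^t γ(s) ds) H + H (∫_{t−δ}^t γ(s) ds − ∫_t^{t+δ} γ(s) ds) + H (∫_{t−δ}^t (s−t+δ) γ(s) ds + ∫_t^{t+δ} (t−s+δ) γ(s) ds) H. -/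
set_option autoImplicit false

open MeasureTheory Filter Finset Matrix Topology

variable {Ω : Type*}

/-- Two `ℝ`-indexed `ℝⁿ`-valued processes have the same finite-dimensional
distributions. -/
def SameFDDR {n : ℕ} [MeasurableSpace Ω] (μ : Measure Ω)
    (X Y : ℝ → Ω → (Fin n → ℝ)) : Prop :=
  ∀ (m : ℕ) (t : Fin m → ℝ),
    μ.map (fun ω (i : Fin m) => X (t i) ω) = μ.map (fun ω (i : Fin m) => Y (t i) ω)

/-- Strict stationarity of an `ℝ`-indexed process. -/
def IsStationaryR {n : ℕ} [MeasurableSpace Ω] (μ : Measure Ω)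
    (X : ℝ → Ω → (Fin n → ℝ)) : Prop :=
  ∀ s : ℝ, SameFDDR μ (fun t => X (t + s)) X

lemma fin_restrict {a b : ℝ} : IsFiniteMeasure (volume.restrict (Set.Ioc a b)) := by
  constructor
  rw [Measure.restrict_apply_univ, Real.volume_Ioc]
  exact ENNReal.ofReal_lt_top

lemma integrable_mul_of_L2 {Ω : Type*} [MeasurableSpace Ω] {μ : Measure Ω} {f g : Ω → ℝ}
    (hf : MemLp f 2 μ) (hg : MemLp g 2 μ) : Integrable (fun ω => f ω * g ω) μ := by
  refine Integrable.mono' ((hf.integrable_sq.add hg.integrable_sq).div_const 2)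
    (hf.aestronglyMeasurable.mul hg.aestronglyMeasurable) (Eventually.of_forall fun ω => ?_)
  have h1 : ‖f ω * g ω‖ = |f ω| * |g ω| := by rw [Real.norm_eq_abs, abs_mul]
  simp only [Pi.add_apply]
  nlinarith [sq_nonneg (|f ω| - |g ω|), sq_abs (f ω), sq_abs (g ω), abs_nonneg (f ω), abs_nonneg (g ω)]

lemma fubini_mixed {Ω : Type*} [MeasurableSpace Ω] (μ : Measure Ω) [IsProbabilityMeasure μ]
    (g : Ω → ℝ) (hgm : Measurable g) (hg2 : MemLp g 2 μ)
    (f : ℝ → Ω → ℝ) (hfm : Measurable (Function.uncurry f))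
    (hfc : ∀ ω, Continuous fun s => f s ω)
    (hf2 : ∀ s, MemLp (f s) 2 μ)
    {C : ℝ} (hbd : ∀ s, ∫ ω, (f s ω)^2 ∂μ ≤ C)
    (a b : ℝ) (hab : a ≤ b) :
    Integrable (fun ω => g ω * ∫ s in a..b, f s ω) μ ∧
    ∫ ω, (g ω * ∫ s in a..b, f s ω) ∂μ = ∫ s in a..b, ∫ ω, g ω * f s ω ∂μ := by
  set ν := volume.restrict (Set.Ioc a b) with hν
  haveI : IsFiniteMeasure ν := fin_restrict
  have hFm : Measurable (fun p : Ω × ℝ => g p.1 * f p.2 p.1) :=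
    (hgm.comp measurable_fst).mul (hfm.comp measurable_swap)
  -- g² integrable on product
  have hg2' : Integrable (fun p : Ω × ℝ => g p.1 ^ 2) (μ.prod ν) := by
    have m1 : Measurable (fun p : Ω × ℝ => g p.1 ^ 2) := (hgm.comp measurable_fst).pow_const 2
    rw [integrable_prod_iff m1.aestronglyMeasurable]
    refine ⟨Eventually.of_forall fun ω =>
      (integrable_const (g ω ^ 2) : Integrable (fun _ : ℝ => g ω ^ 2) ν), ?_⟩
    have : (fun ω => ∫ _ : ℝ, ‖g ω ^ 2‖ ∂ν) = fun ω => (ν Set.univ).toReal * g ω ^ 2 := by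
      funext ω
      rw [integral_const]
      simp [Real.norm_eq_abs, abs_of_nonneg (sq_nonneg (g ω)), smul_eq_mul, Measure.real]
    rw [this]
    exact hg2.integrable_sq.const_mul _
  -- f² integrable on product
  have hf2' : Integrable (fun p : Ω × ℝ => f p.2 p.1 ^ 2) (μ.prod ν) := by
    have m2 : Measurable (fun p : Ω × ℝ => f p.2 p.1 ^ 2) := (hfm.comp measurable_swap).pow_const 2
    rw [integrable_prod_iff' m2.aestronglyMeasurable]
    refine ⟨Eventually.of_forall fun s => (hf2 s).integrable_sq, ?_⟩
    have hmeas : StronglyMeasurable fun s => ∫ ω, ‖f s ω ^ 2‖ ∂μ := by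
      have m3 : Measurable (Function.uncurry fun s ω => ‖f s ω ^ 2‖) := (hfm.pow_const 2).norm
      exact StronglyMeasurable.integral_prod_right m3.stronglyMeasurable
    refine Integrable.mono' (integrable_const C) hmeas.aestronglyMeasurable
      (Eventually.of_forall fun s => ?_)
    have h1 : (fun ω => ‖f s ω ^ 2‖) = fun ω => f s ω ^ 2 := by
      funext ω; rw [Real.norm_eq_abs, abs_of_nonneg (sq_nonneg _)]
    rw [h1, Real.norm_eq_abs, abs_of_nonneg (integral_nonneg fun ω => sq_nonneg _)]
    exact hbd s
  -- F integrable on product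
  have hF : Integrable (Function.uncurry fun ω s => g ω * f s ω) (μ.prod ν) := by
    refine Integrable.mono' (((hg2'.add hf2').div_const 2))
      hFm.aestronglyMeasurable (Eventually.of_forall fun p => ?_)
    simp only [Function.uncurry, Pi.add_apply]
    have h1 : ‖g p.1 * f p.2 p.1‖ = |g p.1| * |f p.2 p.1| := by
      rw [Real.norm_eq_abs, abs_mul]
    nlinarith [sq_nonneg (|g p.1| - |f p.2 p.1|), sq_abs (g p.1), sq_abs (f p.2 p.1),
      abs_nonneg (g p.1), abs_nonneg (f p.2 p.1)]
  have hswap := integral_integral_swap hF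
  constructor
  · have := hF.integral_prod_left
    refine this.congr (Eventually.of_forall fun ω => ?_)
    simp only [Function.uncurry]
    rw [integral_const_mul, intervalIntegral.integral_of_le hab]
  · rw [intervalIntegral.integral_of_le hab]
    rw [← hswap]
    apply integral_congr_ae
    refine Eventually.of_forall fun ω => ?_
    show g ω * (∫ s in a..b, f s ω) = ∫ y, g ω * f y ω ∂ν
    rw [intervalIntegral.integral_of_le hab, ← integral_const_mul]

lemma fubini_double {Ω : Type*} [MeasurableSpace Ω] (μ : Measure Ω) [IsProbabilityMeasure μ]
    (f1 f2 : ℝ → Ω → ℝ)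
    (h1m : Measurable (Function.uncurry f1)) (h2m : Measurable (Function.uncurry f2))
    (h12 : ∀ s, MemLp (f1 s) 2 μ) (h22 : ∀ s, MemLp (f2 s) 2 μ)
    {C1 C2 : ℝ} (hb1 : ∀ s, ∫ ω, (f1 s ω)^2 ∂μ ≤ C1) (hb2 : ∀ s, ∫ ω, (f2 s ω)^2 ∂μ ≤ C2)
    (a b c d : ℝ) (hab : a ≤ b) (hcd : c ≤ d) :
    Integrable (fun ω => (∫ s in a..b, f1 s ω) * (∫ v in c..d, f2 v ω)) μ ∧
    ∫ ω, ((∫ s in a..b, f1 s ω) * (∫ v in c..d, f2 v ω)) ∂μ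
      = ∫ s in a..b, (∫ v in c..d, (∫ ω, f1 s ω * f2 v ω ∂μ)) := by
  set ν1 := volume.restrict (Set.Ioc a b) with hν1
  set ν2 := volume.restrict (Set.Ioc c d) with hν2
  haveI : IsFiniteMeasure ν1 := fin_restrict
  haveI : IsFiniteMeasure ν2 := fin_restrict
  set ν := ν1.prod ν2 with hν
  have mA : Measurable (fun p : Ω × (ℝ × ℝ) => f1 p.2.1 p.1) :=
    h1m.comp ((measurable_fst.comp measurable_snd).prodMk measurable_fst)
  have mB : Measurable (fun p : Ω × (ℝ × ℝ) => f2 p.2.2 p.1) :=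
    h2m.comp ((measurable_snd.comp measurable_snd).prodMk measurable_fst)
  have hFm : Measurable (fun p : Ω × (ℝ × ℝ) => f1 p.2.1 p.1 * f2 p.2.2 p.1) := mA.mul mB
  have hsq : ∀ (f : ℝ → Ω → ℝ), Measurable (Function.uncurry f) → (∀ s, MemLp (f s) 2 μ) →
      ∀ (C : ℝ), (∀ s, ∫ ω, (f s ω)^2 ∂μ ≤ C) →
      ∀ (e : ℝ × ℝ → ℝ), Measurable e →
      Integrable (fun p : Ω × (ℝ × ℝ) => f (e p.2) p.1 ^ 2) (μ.prod ν) := by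
    intro f hfm hf2 C hbd e hem
    have m1 : Measurable (fun p : Ω × (ℝ × ℝ) => f (e p.2) p.1 ^ 2) :=
      ((hfm.comp ((hem.comp measurable_snd).prodMk measurable_fst)).pow_const 2)
    rw [integrable_prod_iff' m1.aestronglyMeasurable]
    constructor
    · exact Eventually.of_forall fun y => (hf2 (e y)).integrable_sq
    · have hmeas : StronglyMeasurable fun y : ℝ × ℝ => ∫ ω, ‖f (e y) ω ^ 2‖ ∂μ := by
        have m3 : Measurable (Function.uncurry fun (y : ℝ × ℝ) ω => ‖f (e y) ω ^ 2‖) :=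
          ((hfm.comp ((hem.comp measurable_fst).prodMk measurable_snd)).pow_const 2).norm
        exact StronglyMeasurable.integral_prod_right m3.stronglyMeasurable
      refine Integrable.mono' (integrable_const C) hmeas.aestronglyMeasurable
        (Eventually.of_forall fun y => ?_)
      have h1 : (fun ω => ‖f (e y) ω ^ 2‖) = fun ω => f (e y) ω ^ 2 := by
        funext ω; rw [Real.norm_eq_abs, abs_of_nonneg (sq_nonneg _)]
      rw [h1, Real.norm_eq_abs, abs_of_nonneg (integral_nonneg fun ω => sq_nonneg _)]
      exact hbd (e y)
  have hsq1 := hsq f1 h1m h12 C1 hb1 Prod.fst measurable_fst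
  have hsq2 := hsq f2 h2m h22 C2 hb2 Prod.snd measurable_snd
  have hF : Integrable (Function.uncurry fun (ω : Ω) (y : ℝ × ℝ) => f1 y.1 ω * f2 y.2 ω)
      (μ.prod ν) := by
    refine Integrable.mono' ((hsq1.add hsq2).div_const 2)
      hFm.aestronglyMeasurable (Eventually.of_forall fun p => ?_)
    simp only [Function.uncurry, Pi.add_apply]
    have h1 : ‖f1 p.2.1 p.1 * f2 p.2.2 p.1‖ = |f1 p.2.1 p.1| * |f2 p.2.2 p.1| := by
      rw [Real.norm_eq_abs, abs_mul]
    nlinarith [sq_nonneg (|f1 p.2.1 p.1| - |f2 p.2.2 p.1|), sq_abs (f1 p.2.1 p.1),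
      sq_abs (f2 p.2.2 p.1), abs_nonneg (f1 p.2.1 p.1), abs_nonneg (f2 p.2.2 p.1)]
  have hprodmul : ∀ ω : Ω, (∫ s in a..b, f1 s ω) * (∫ v in c..d, f2 v ω)
      = ∫ y, f1 y.1 ω * f2 y.2 ω ∂ν := by
    intro ω
    rw [intervalIntegral.integral_of_le hab, intervalIntegral.integral_of_le hcd]
    exact (integral_prod_mul (μ := ν1) (ν := ν2) (fun s => f1 s ω) (fun v => f2 v ω)).symm
  constructor
  · refine hF.integral_prod_left.congr (Eventually.of_forall fun ω => ?_)
    simp only [Function.uncurry]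
    exact (hprodmul ω).symm
  · have hswap := integral_integral_swap hF
    have e1 : ∫ ω, ((∫ s in a..b, f1 s ω) * (∫ v in c..d, f2 v ω)) ∂μ
        = ∫ ω, (∫ y, f1 y.1 ω * f2 y.2 ω ∂ν) ∂μ := by
      exact integral_congr_ae (Eventually.of_forall fun ω => hprodmul ω)
    rw [e1, hswap]
    have hInt2 : Integrable (fun y : ℝ × ℝ => ∫ ω, f1 y.1 ω * f2 y.2 ω ∂μ) ν :=
      hF.integral_prod_right
    rw [hν] at hInt2 ⊢
    rw [integral_prod _ hInt2]
    rw [intervalIntegral.integral_of_le hab]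
    apply integral_congr_ae (Eventually.of_forall fun s => ?_)
    rw [intervalIntegral.integral_of_le hcd]

lemma kernel_swap (g : ℝ → ℝ) (hgm : Measurable g) {C : ℝ} (hbd : ∀ u, |g u| ≤ C)
    (t δ : ℝ) (hδ : 0 < δ) :
    ∫ s in (t-δ)..t, (∫ u in s..(s+δ), g u) =
      (∫ u in (t-δ)..t, (u - t + δ) * g u) + ∫ u in t..(t+δ), (t - u + δ) * g u := by
  have hC : 0 ≤ C := le_trans (abs_nonneg (g 0)) (hbd 0)
  set S := Set.Ioc (t-δ) t with hS
  set T := Set.Ioc (t-δ) (t+δ) with hT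
  set μ' := volume.restrict S with hμ'
  set ν' := volume.restrict T with hν'
  haveI : IsFiniteMeasure μ' := fin_restrict
  haveI : IsFiniteMeasure ν' := fin_restrict
  set F : ℝ → ℝ → ℝ := fun s u => (Set.Ioc s (s+δ)).indicator g u with hF
  have hFm : Measurable (Function.uncurry F) := by
    have : Function.uncurry F =
        {q : ℝ × ℝ | q.1 < q.2 ∧ q.2 ≤ q.1 + δ}.indicator (fun q => g q.2) := by
      funext p
      simp only [Function.uncurry, hF, Set.indicator_apply, Set.mem_Ioc, Set.mem_setOf_eq]
    rw [this]
    exact (hgm.comp measurable_snd).indicator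
      ((measurableSet_lt measurable_fst measurable_snd).inter
        (measurableSet_le measurable_snd (measurable_fst.add_const δ)))
  have hFint : Integrable (Function.uncurry F) (μ'.prod ν') := by
    refine Integrable.mono' (integrable_const C) hFm.aestronglyMeasurable
      (Eventually.of_forall fun p => ?_)
    simp only [Function.uncurry, hF, Set.indicator_apply]
    split
    · exact hbd p.2
    · simpa using hC
  have hswap := integral_integral_swap hFint
  -- LHS identification
  have hLHS : ∫ s in (t-δ)..t, (∫ u in s..(s+δ), g u) = ∫ s, (∫ u, F s u ∂ν') ∂μ' := by
    rw [intervalIntegral.integral_of_le (by linarith : t - δ ≤ t)]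
    refine setIntegral_congr_fun measurableSet_Ioc fun s hs => ?_
    have hsub : Set.Ioc s (s+δ) ⊆ T := by
      intro u hu
      rw [Set.mem_Ioc] at hu ⊢
      rw [Set.mem_Ioc] at hs
      constructor
      · linarith [hu.1, hs.1]
      · linarith [hu.2, hs.2]
    rw [intervalIntegral.integral_of_le (by linarith : s ≤ s + δ)]
    show _ = ∫ u in T, (Set.Ioc s (s+δ)).indicator g u
    rw [setIntegral_indicator measurableSet_Ioc, Set.inter_eq_right.mpr hsub]
  rw [hLHS, hswap]
  -- inner integral in s, computed for each u
  have vol_eq : ∀ (p q : ℝ) (E : Set ℝ), p ≤ q → Set.Ioo p q ⊆ E → E ⊆ Set.Icc p q →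
      (volume E).toReal = q - p := by
    intro p q E hpq h1 h2
    have : volume E = ENNReal.ofReal (q - p) := by
      refine le_antisymm ?_ ?_
      · rw [← Real.volume_Icc]; exact measure_mono h2
      · rw [← Real.volume_Ioo]; exact measure_mono h1
    rw [this, ENNReal.toReal_ofReal (by linarith)]
  have hind : ∀ u s : ℝ, F s u = (Set.Ico (u-δ) u).indicator (fun _ => g u) s := by
    intro u s
    simp only [hF, Set.indicator_apply, Set.mem_Ioc, Set.mem_Ico]
    refine if_congr ?_ rfl rfl
    constructor <;> (intro h; exact ⟨by linarith [h.1, h.2], by linarith [h.1, h.2]⟩)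
  have hinner : ∀ u : ℝ, (∫ s, F s u ∂μ') = (volume (S ∩ Set.Ico (u-δ) u)).toReal * g u := by
    intro u
    have : (fun s => F s u) = (Set.Ico (u-δ) u).indicator (fun _ => g u) := by
      funext s; exact hind u s
    rw [hμ']
    show ∫ s in S, F s u = _
    rw [show (fun s => F s u) = (Set.Ico (u-δ) u).indicator (fun _ => g u) from this]
    rw [setIntegral_indicator measurableSet_Ico, setIntegral_const, smul_eq_mul, Measure.real]
  -- split the T integral
  have hIO : IntegrableOn (fun u => ∫ s, F s u ∂μ') T volume := hFint.integral_prod_right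
  have hTsplit : T = Set.Ioc (t-δ) t ∪ Set.Ioc t (t+δ) :=
    (Set.Ioc_union_Ioc_eq_Ioc (by linarith) (by linarith)).symm
  have hsplit : ∫ u, (∫ s, F s u ∂μ') ∂ν'
      = (∫ u in Set.Ioc (t-δ) t, (∫ s, F s u ∂μ'))
        + ∫ u in Set.Ioc t (t+δ), (∫ s, F s u ∂μ') := by
    rw [hν', hTsplit]
    exact setIntegral_union (Set.Ioc_disjoint_Ioc_of_le le_rfl) measurableSet_Ioc
      (hIO.mono_set (by rw [hTsplit]; exact Set.subset_union_left))
      (hIO.mono_set (by rw [hTsplit]; exact Set.subset_union_right))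
  rw [hsplit]
  have h1 : ∫ u in Set.Ioc (t-δ) t, (∫ s, F s u ∂μ') = ∫ u in (t-δ)..t, (u - t + δ) * g u := by
    rw [intervalIntegral.integral_of_le (by linarith : t - δ ≤ t)]
    refine setIntegral_congr_fun measurableSet_Ioc fun u hu => ?_
    rw [Set.mem_Ioc] at hu
    rw [hinner u]
    have hv : (volume (S ∩ Set.Ico (u-δ) u)).toReal = u - (t-δ) := by
      refine vol_eq (t-δ) u _ (by linarith) ?_ ?_
      · intro s hs; rw [Set.mem_Ioo] at hs
        exact ⟨⟨by linarith [hs.1], by linarith [hs.2, hu.2]⟩, ⟨by linarith [hs.1, hu.2], hs.2⟩⟩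
      · rintro s ⟨hs1, hs2⟩
        rw [Set.mem_Ioc] at hs1; rw [Set.mem_Ico] at hs2
        exact ⟨le_of_lt hs1.1, le_of_lt hs2.2⟩
    rw [hv]; ring
  have h2 : ∫ u in Set.Ioc t (t+δ), (∫ s, F s u ∂μ') = ∫ u in t..(t+δ), (t - u + δ) * g u := by
    rw [intervalIntegral.integral_of_le (by linarith : t ≤ t + δ)]
    refine setIntegral_congr_fun measurableSet_Ioc fun u hu => ?_
    rw [Set.mem_Ioc] at hu
    rw [hinner u]
    have hv : (volume (S ∩ Set.Ico (u-δ) u)).toReal = t - (u-δ) := by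
      refine vol_eq (u-δ) t _ (by linarith) ?_ ?_
      · intro s hs; rw [Set.mem_Ioo] at hs
        exact ⟨⟨by linarith [hs.1, hu.1], le_of_lt hs.2⟩, ⟨le_of_lt hs.1, by linarith [hs.2, hu.1]⟩⟩
      · rintro s ⟨hs1, hs2⟩
        rw [Set.mem_Ioc] at hs1; rw [Set.mem_Ico] at hs2
        exact ⟨hs2.1, hs1.2⟩
    rw [hv]; ring
  rw [h1, h2]


/-- for a centred square-integrable strictly stationary `X` with
a.s. continuous paths and autocovariance `γ`, the noise
`G_t = X_t − X_0 + H ∫_0^t X_s ds` of the integrated Langevin equation satisfies,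
for all `t ∈ ℝ` and `δ > 0`,
`r_δ(t) = 2γ(t) − γ(t+δ) − γ(t−δ) + (∫_t^{t+δ}γ − ∫_{t−δ}^tγ) H +
H (∫_{t−δ}^tγ − ∫_t^{t+δ}γ) + H (∫_{t−δ}^t (s−t+δ)γ(s)ds + ∫_t^{t+δ} (t−s+δ)γ(s)ds) H`,
where `r_δ(t) = E[(Δ_t^δ G)(Δ_0^δ G)ᵀ]`. -/
theorem stmt16 {n : ℕ} [MeasurableSpace Ω] (μ : Measure Ω) [IsProbabilityMeasure μ]
    (H : Matrix (Fin n) (Fin n) ℝ) (hH : H.PosDef)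
    (X : ℝ → Ω → (Fin n → ℝ))
    (hmX : ∀ t, Measurable (X t))
    (hpaths : ∀ᵐ ω ∂μ, Continuous fun s => X s ω)
    (hX : IsStationaryR μ X)
    (hcent : ∀ (t : ℝ) (i : Fin n), ∫ ω, X t ω i ∂μ = 0)
    (hL2X : ∀ (t : ℝ) (i : Fin n), MemLp (fun ω => X t ω i) 2 μ)
    (γ : ℝ → Matrix (Fin n) (Fin n) ℝ)
    (hγ : ∀ t : ℝ, γ t = Matrix.of fun i j => ∫ ω, X t ω i * X 0 ω j ∂μ)
    (hγshift : ∀ a b : ℝ,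
      (Matrix.of fun i j => ∫ ω, X a ω i * X b ω j ∂μ) = γ (a - b))
    (G : ℝ → Ω → (Fin n → ℝ))
    (hG : ∀ (t : ℝ) (ω : Ω), G t ω =
      X t ω - X 0 ω + H.mulVec (fun i => ∫ s in (0 : ℝ)..t, X s ω i))
    (r : ℝ → ℝ → Matrix (Fin n) (Fin n) ℝ)
    (hr : ∀ (δ t : ℝ), r δ t = Matrix.of fun i j =>
      ∫ ω, (G t ω - G (t - δ) ω) i * (G 0 ω - G (-δ) ω) j ∂μ) :
    ∀ (t δ : ℝ), 0 < δ →
      r δ t = (2 : ℝ) • γ t - γ (t + δ) - γ (t - δ)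
        + ((Matrix.of fun i j => ∫ s in t..(t + δ), γ s i j)
            - (Matrix.of fun i j => ∫ s in (t - δ)..t, γ s i j)) * H
        + H * ((Matrix.of fun i j => ∫ s in (t - δ)..t, γ s i j)
            - (Matrix.of fun i j => ∫ s in t..(t + δ), γ s i j))
        + H * ((Matrix.of fun i j => ∫ s in (t - δ)..t, (s - t + δ) * γ s i j)
            + (Matrix.of fun i j => ∫ s in t..(t + δ), (t - s + δ) * γ s i j)) * H := by
  intro t δ hδ
  classical
  -- null set of discontinuous paths
  obtain ⟨N, hNsub, hNm, hNnull⟩ := exists_measurable_superset_of_null (ae_iff.mp hpaths)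
  have hNae : ∀ᵐ ω ∂μ, ω ∉ N := measure_eq_zero_iff_ae_notMem.mp hNnull
  set Y : ℝ → Ω → Fin n → ℝ := fun s ω => if ω ∈ N then 0 else X s ω with hY
  have hXY : ∀ ω, ω ∉ N → ∀ s, X s ω = Y s ω := by
    intro ω hω s; simp [hY, hω]
  have hYm : ∀ s, Measurable (Y s) := fun s => Measurable.ite hNm measurable_const (hmX s)
  have hYc : ∀ ω, Continuous fun s => Y s ω := by
    intro ω
    by_cases hω : ω ∈ N
    · simpa [hY, hω] using (continuous_const : Continuous fun _ : ℝ => (0 : Fin n → ℝ))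
    · have hc : Continuous fun s => X s ω := by
        by_contra hc
        exact hω (hNsub hc)
      simpa [hY, hω] using hc
  have hYunc : Measurable (Function.uncurry Y) :=
    measurable_uncurry_of_continuous_of_measurable hYc hYm
  set x : Fin n → ℝ → Ω → ℝ := fun k s ω => Y s ω k with hx
  have hxm : ∀ k, Measurable (Function.uncurry (x k)) := fun k =>
    (measurable_pi_apply k).comp hYunc
  have hxms : ∀ k s, Measurable (x k s) := fun k s =>
    (measurable_pi_apply k).comp (hYm s)
  have hxc : ∀ k ω, Continuous fun s => x k s ω := fun k ω =>
    (continuous_apply k).comp (hYc ω)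
  have hxae : ∀ k s, (fun ω => X s ω k) =ᵐ[μ] x k s := by
    intro k s
    filter_upwards [hNae] with ω hω
    rw [hXY ω hω s]
  have hxL2 : ∀ k s, MemLp (x k s) 2 μ := fun k s => (hL2X s k).ae_eq (hxae k s)
  have hcov : ∀ (a b : ℝ) (k l : Fin n), ∫ ω, x k a ω * x l b ω ∂μ = γ (a - b) k l := by
    intro a b k l
    have h1 : γ (a - b) k l = ∫ ω, X a ω k * X b ω l ∂μ := by
      rw [← hγshift a b]; rfl
    rw [h1]
    apply integral_congr_ae
    filter_upwards [hNae] with ω hω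
    rw [hXY ω hω a, hXY ω hω b]
  have hsq : ∀ (k : Fin n) (s : ℝ), ∫ ω, (x k s ω) ^ 2 ∂μ = γ 0 k k := by
    intro k s
    have h1 := hcov s s k k
    rw [sub_self] at h1
    rw [← h1]
    congr 1; funext ω; ring
  have hsqbd : ∀ (k : Fin n) (s : ℝ), ∫ ω, (x k s ω) ^ 2 ∂μ ≤ γ 0 k k :=
    fun k s => le_of_eq (hsq k s)
  have hflip : ∀ (d : ℝ) (k l : Fin n), γ (-d) k l = γ d l k := by
    intro d k l
    have h1 : γ (-d) k l = ∫ ω, X 0 ω k * X d ω l ∂μ := by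
      have h := hγshift 0 d; rw [zero_sub] at h; rw [← h]; rfl
    have h2 : γ d l k = ∫ ω, X d ω l * X 0 ω k ∂μ := by
      have h := hγshift d 0; rw [sub_zero] at h; rw [← h]; rfl
    rw [h1, h2]
    congr 1; funext ω; ring
  have hγeq : ∀ (k l : Fin n), (fun u => γ u k l) = fun u => ∫ ω, x k u ω * x l 0 ω ∂μ := by
    intro k l; funext u; rw [hcov u 0 k l, sub_zero]
  have hγmeas : ∀ (k l : Fin n), Measurable fun u => γ u k l := by
    intro k l
    rw [hγeq k l]
    have m1 : Measurable (Function.uncurry fun u ω => x k u ω * x l 0 ω) :=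
      (hxm k).mul ((hxms l 0).comp measurable_snd)
    exact (StronglyMeasurable.integral_prod_right m1.stronglyMeasurable).measurable
  have hγbd : ∀ (k l : Fin n) (u : ℝ), |γ u k l| ≤ (γ 0 k k + γ 0 l l) / 2 := by
    intro k l u
    have h1 : γ u k l = ∫ ω, x k u ω * x l 0 ω ∂μ := congrFun (hγeq k l) u
    rw [h1]
    have hint : Integrable (fun ω => x k u ω * x l 0 ω) μ :=
      integrable_mul_of_L2 (hxL2 k u) (hxL2 l 0)
    calc |∫ ω, x k u ω * x l 0 ω ∂μ| ≤ ∫ ω, |x k u ω * x l 0 ω| ∂μ := by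
          simpa only [Real.norm_eq_abs] using
            norm_integral_le_integral_norm (μ := μ) (fun ω => x k u ω * x l 0 ω)
      _ ≤ ∫ ω, ((x k u ω) ^ 2 + (x l 0 ω) ^ 2) / 2 ∂μ := by
          refine integral_mono hint.abs
            (((hxL2 k u).integrable_sq.add (hxL2 l 0).integrable_sq).div_const 2) fun ω => ?_
          have := abs_mul (x k u ω) (x l 0 ω)
          nlinarith [sq_nonneg (|x k u ω| - |x l 0 ω|), sq_abs (x k u ω), sq_abs (x l 0 ω),
            abs_nonneg (x k u ω), abs_nonneg (x l 0 ω)]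
      _ = (γ 0 k k + γ 0 l l) / 2 := by
          rw [integral_div, integral_add (hxL2 k u).integrable_sq (hxL2 l 0).integrable_sq,
            hsq, hsq]
  have hHsym : ∀ a b, H a b = H b a := by
    intro a b
    have h := hH.1.apply b a
    rwa [star_trivial] at h
  have hab1 : t - δ ≤ t := by linarith
  have hab2 : (-δ : ℝ) ≤ 0 := by linarith
  -- now work entrywise
  rw [hr δ t]
  ext i j
  rw [Matrix.of_apply]
  -- Fubini instances
  have hmixA : ∀ (a : ℝ) (l : Fin n),
      Integrable (fun ω => x i a ω * ∫ v in (-δ)..0, x l v ω) μ ∧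
      (∫ ω, (x i a ω * ∫ v in (-δ)..0, x l v ω) ∂μ) = ∫ v in (-δ)..0, γ (a - v) i l := by
    intro a l
    obtain ⟨h1, h2⟩ := fubini_mixed μ (x i a) (hxms i a) (hxL2 i a) (x l) (hxm l) (hxc l)
      (hxL2 l) (hsqbd l) (-δ) 0 hab2
    exact ⟨h1, h2.trans (intervalIntegral.integral_congr fun v _ => hcov a v i l)⟩
  have hmixB : ∀ (b : ℝ) (k : Fin n),
      Integrable (fun ω => x j b ω * ∫ s in (t - δ)..t, x k s ω) μ ∧
      (∫ ω, (x j b ω * ∫ s in (t - δ)..t, x k s ω) ∂μ)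
        = ∫ s in (t - δ)..t, γ (b - s) j k := by
    intro b k
    obtain ⟨h1, h2⟩ := fubini_mixed μ (x j b) (hxms j b) (hxL2 j b) (x k) (hxm k) (hxc k)
      (hxL2 k) (hsqbd k) (t - δ) t hab1
    exact ⟨h1, h2.trans (intervalIntegral.integral_congr fun s _ => hcov b s j k)⟩
  have hdbl : ∀ (k l : Fin n),
      Integrable (fun ω => (∫ s in (t - δ)..t, x k s ω) * ∫ v in (-δ)..0, x l v ω) μ ∧
      (∫ ω, ((∫ s in (t - δ)..t, x k s ω) * ∫ v in (-δ)..0, x l v ω) ∂μ)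
        = ∫ s in (t - δ)..t, (∫ v in (-δ)..0, γ (s - v) k l) := by
    intro k l
    obtain ⟨h1, h2⟩ := fubini_double μ (x k) (x l) (hxm k) (hxm l) (hxL2 k) (hxL2 l)
      (hsqbd k) (hsqbd l) (t - δ) t (-δ) 0 hab1 hab2
    refine ⟨h1, h2.trans (intervalIntegral.integral_congr fun s _ => ?_)⟩
    exact intervalIntegral.integral_congr fun v _ => hcov s v k l
  -- value transformations
  have vA : ∀ l : Fin n, (∫ v in (-δ)..0, γ (t - v) i l) = ∫ u in t..(t + δ), γ u i l := by
    intro l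
    have h := intervalIntegral.integral_comp_sub_left (a := -δ) (b := 0) (fun u => γ u i l) t
    rw [sub_zero, sub_neg_eq_add] at h
    exact h
  have vA' : ∀ l : Fin n,
      (∫ v in (-δ)..0, γ (t - δ - v) i l) = ∫ u in (t - δ)..t, γ u i l := by
    intro l
    have h := intervalIntegral.integral_comp_sub_left (a := -δ) (b := 0) (fun u => γ u i l)
      (t - δ)
    rw [sub_zero, sub_neg_eq_add] at h
    have hb : t - δ + δ = t := by ring
    rw [hb] at h
    exact h
  have vB : ∀ k : Fin n,
      (∫ s in (t - δ)..t, γ (0 - s) j k) = ∫ s in (t - δ)..t, γ s k j := by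
    intro k
    refine intervalIntegral.integral_congr fun s _ => ?_
    rw [zero_sub, hflip s j k]
  have vB' : ∀ k : Fin n,
      (∫ s in (t - δ)..t, γ (-δ - s) j k) = ∫ u in t..(t + δ), γ u k j := by
    intro k
    have h1 : (∫ s in (t - δ)..t, γ (-δ - s) j k) = ∫ s in (t - δ)..t, γ (s + δ) k j := by
      refine intervalIntegral.integral_congr fun s _ => ?_
      have he : -δ - s = -(s + δ) := by ring
      rw [he, hflip (s + δ) j k]
    have h2 := intervalIntegral.integral_comp_add_right (a := t - δ) (b := t)
      (fun u => γ u k j) δ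
    have hb : t - δ + δ = t := by ring
    rw [hb] at h2
    exact h1.trans h2
  have vD : ∀ k l : Fin n,
      (∫ s in (t - δ)..t, (∫ v in (-δ)..0, γ (s - v) k l))
        = (∫ u in (t - δ)..t, (u - t + δ) * γ u k l)
          + ∫ u in t..(t + δ), (t - u + δ) * γ u k l := by
    intro k l
    have h1 : (∫ s in (t - δ)..t, (∫ v in (-δ)..0, γ (s - v) k l))
        = ∫ s in (t - δ)..t, (∫ u in s..(s + δ), γ u k l) := by
      refine intervalIntegral.integral_congr fun s _ => ?_
      have h := intervalIntegral.integral_comp_sub_left (a := -δ) (b := 0) (fun u => γ u k l) s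
      rw [sub_zero, sub_neg_eq_add] at h
      exact h
    rw [h1]
    exact kernel_swap (fun u => γ u k l) (hγmeas k l) (hγbd k l) t δ hδ
  -- pointwise identity
  have hpt : ∀ᵐ ω ∂μ, (G t ω - G (t - δ) ω) i * (G 0 ω - G (-δ) ω) j
      = ((x i t ω - x i (t - δ) ω) * (x j 0 ω - x j (-δ) ω))
        + (∑ l, H j l * ((x i t ω - x i (t - δ) ω) * ∫ v in (-δ)..0, x l v ω))
        + (∑ k, H i k * ((x j 0 ω - x j (-δ) ω) * ∫ s in (t - δ)..t, x k s ω))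
        + ∑ k, ∑ l, (H i k * H j l)
            * ((∫ s in (t - δ)..t, x k s ω) * ∫ v in (-δ)..0, x l v ω) := by
    filter_upwards [hNae] with ω hω
    have hXYs := hXY ω hω
    have hd : ∀ (a b : ℝ) (m : Fin n), (G a ω - G b ω) m
        = x m a ω - x m b ω + ∑ k, H m k * ∫ s in b..a, x k s ω := by
      intro a b m
      have hfun : ∀ k : Fin n, (fun s => X s ω k) = fun s => x k s ω := by
        intro k; funext s; rw [hXYs s]
      have hsub : ∀ k : Fin n, (∫ s in (0:ℝ)..a, X s ω k) - (∫ s in (0:ℝ)..b, X s ω k)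
          = ∫ s in b..a, x k s ω := by
        intro k
        rw [hfun k]
        exact intervalIntegral.integral_interval_sub_left
          (((hxc k ω).intervalIntegrable 0 a)) (((hxc k ω).intervalIntegrable 0 b))
      have e2 : X a ω m = x m a ω := by rw [hXYs a]
      have e3 : X b ω m = x m b ω := by rw [hXYs b]
      rw [Pi.sub_apply, hG a ω, hG b ω]
      simp only [Pi.add_apply, Pi.sub_apply, Matrix.mulVec, dotProduct]
      have e1 : (∑ k, H m k * ∫ s in (0:ℝ)..a, X s ω k)
          - (∑ k, H m k * ∫ s in (0:ℝ)..b, X s ω k)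
          = ∑ k, H m k * ∫ s in b..a, x k s ω := by
        rw [← Finset.sum_sub_distrib]
        exact Finset.sum_congr rfl fun k _ => by rw [← mul_sub, hsub k]
      rw [e2, e3]
      linear_combination e1
    rw [hd t (t - δ) i, hd 0 (-δ) j]
    have e0 : (x i t ω - x i (t - δ) ω + ∑ k, H i k * ∫ s in (t - δ)..t, x k s ω)
        * (x j 0 ω - x j (-δ) ω + ∑ l, H j l * ∫ v in (-δ)..0, x l v ω)
      = (x i t ω - x i (t - δ) ω) * (x j 0 ω - x j (-δ) ω)
        + (x i t ω - x i (t - δ) ω) * (∑ l, H j l * ∫ v in (-δ)..0, x l v ω)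
        + (∑ k, H i k * ∫ s in (t - δ)..t, x k s ω) * (x j 0 ω - x j (-δ) ω)
        + (∑ k, H i k * ∫ s in (t - δ)..t, x k s ω)
            * (∑ l, H j l * ∫ v in (-δ)..0, x l v ω) := by ring
    rw [e0, Finset.mul_sum, Finset.sum_mul, Finset.sum_mul_sum]
    have g2 : (∑ l, (x i t ω - x i (t - δ) ω) * (H j l * ∫ v in (-δ)..0, x l v ω))
        = ∑ l, H j l * ((x i t ω - x i (t - δ) ω) * ∫ v in (-δ)..0, x l v ω) :=
      Finset.sum_congr rfl fun l _ => by ring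
    have g3 : (∑ k, (H i k * ∫ s in (t - δ)..t, x k s ω) * (x j 0 ω - x j (-δ) ω))
        = ∑ k, H i k * ((x j 0 ω - x j (-δ) ω) * ∫ s in (t - δ)..t, x k s ω) :=
      Finset.sum_congr rfl fun k _ => by ring
    have g4 : (∑ k, ∑ l, (H i k * ∫ s in (t - δ)..t, x k s ω)
          * (H j l * ∫ v in (-δ)..0, x l v ω))
        = ∑ k, ∑ l, (H i k * H j l)
            * ((∫ s in (t - δ)..t, x k s ω) * ∫ v in (-δ)..0, x l v ω) :=
      Finset.sum_congr rfl fun k _ => Finset.sum_congr rfl fun l _ => by ring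
    rw [g2, g3, g4]
  -- integrability and values of the four groups
  have i1 := integrable_mul_of_L2 (hxL2 i t) (hxL2 j 0)
  have i2 := integrable_mul_of_L2 (hxL2 i t) (hxL2 j (-δ))
  have i3 := integrable_mul_of_L2 (hxL2 i (t - δ)) (hxL2 j 0)
  have i4 := integrable_mul_of_L2 (hxL2 i (t - δ)) (hxL2 j (-δ))
  have heq1 : (fun ω => (x i t ω - x i (t - δ) ω) * (x j 0 ω - x j (-δ) ω))
      = fun ω => x i t ω * x j 0 ω - x i t ω * x j (-δ) ω - x i (t - δ) ω * x j 0 ω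
        + x i (t - δ) ω * x j (-δ) ω := by funext ω; ring
  have i12 : Integrable (fun ω => x i t ω * x j 0 ω - x i t ω * x j (-δ) ω) μ := i1.sub i2
  have i123 : Integrable (fun ω => x i t ω * x j 0 ω - x i t ω * x j (-δ) ω
      - x i (t - δ) ω * x j 0 ω) μ := i12.sub i3
  have iF1 : Integrable (fun ω => (x i t ω - x i (t - δ) ω) * (x j 0 ω - x j (-δ) ω)) μ := by
    rw [heq1]; exact i123.add i4
  have vF1 : ∫ ω, ((x i t ω - x i (t - δ) ω) * (x j 0 ω - x j (-δ) ω)) ∂μ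
      = 2 * γ t i j - γ (t + δ) i j - γ (t - δ) i j := by
    rw [heq1, integral_add i123 i4, integral_sub i12 i3,
      integral_sub i1 i2, hcov t 0 i j, hcov t (-δ) i j, hcov (t - δ) 0 i j,
      hcov (t - δ) (-δ) i j, show t - (0:ℝ) = t from by ring, show t - -δ = t + δ from by ring,
      show t - δ - 0 = t - δ from by ring, show t - δ - -δ = t from by ring]
    ring
  have heq2 : ∀ l : Fin n, (fun ω => (x i t ω - x i (t - δ) ω) * ∫ v in (-δ)..0, x l v ω)
      = fun ω => (x i t ω * ∫ v in (-δ)..0, x l v ω)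
        - (x i (t - δ) ω * ∫ v in (-δ)..0, x l v ω) := by
    intro l; funext ω; ring
  have iF2e : ∀ l : Fin n,
      Integrable (fun ω => (x i t ω - x i (t - δ) ω) * ∫ v in (-δ)..0, x l v ω) μ := by
    intro l; rw [heq2 l]; exact (hmixA t l).1.sub (hmixA (t - δ) l).1
  have iF2 : Integrable (fun ω => ∑ l, H j l
      * ((x i t ω - x i (t - δ) ω) * ∫ v in (-δ)..0, x l v ω)) μ :=
    integrable_finset_sum _ fun l _ => ((iF2e l).const_mul _)
  have vF2 : ∫ ω, (∑ l, H j l * ((x i t ω - x i (t - δ) ω) * ∫ v in (-δ)..0, x l v ω)) ∂μ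
      = ∑ l, H j l * ((∫ u in t..(t + δ), γ u i l) - ∫ u in (t - δ)..t, γ u i l) := by
    rw [integral_finset_sum _ fun l _ => ((iF2e l).const_mul _)]
    refine Finset.sum_congr rfl fun l _ => ?_
    rw [integral_const_mul]
    congr 1
    rw [heq2 l, integral_sub (hmixA t l).1 (hmixA (t - δ) l).1, (hmixA t l).2,
      (hmixA (t - δ) l).2, vA l, vA' l]
  have heq3 : ∀ k : Fin n, (fun ω => (x j 0 ω - x j (-δ) ω) * ∫ s in (t - δ)..t, x k s ω)
      = fun ω => (x j 0 ω * ∫ s in (t - δ)..t, x k s ω)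
        - (x j (-δ) ω * ∫ s in (t - δ)..t, x k s ω) := by
    intro k; funext ω; ring
  have iF3e : ∀ k : Fin n,
      Integrable (fun ω => (x j 0 ω - x j (-δ) ω) * ∫ s in (t - δ)..t, x k s ω) μ := by
    intro k; rw [heq3 k]; exact (hmixB 0 k).1.sub (hmixB (-δ) k).1
  have iF3 : Integrable (fun ω => ∑ k, H i k
      * ((x j 0 ω - x j (-δ) ω) * ∫ s in (t - δ)..t, x k s ω)) μ :=
    integrable_finset_sum _ fun k _ => ((iF3e k).const_mul _)
  have vF3 : ∫ ω, (∑ k, H i k * ((x j 0 ω - x j (-δ) ω) * ∫ s in (t - δ)..t, x k s ω)) ∂μ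
      = ∑ k, H i k * ((∫ s in (t - δ)..t, γ s k j) - ∫ u in t..(t + δ), γ u k j) := by
    rw [integral_finset_sum _ fun k _ => ((iF3e k).const_mul _)]
    refine Finset.sum_congr rfl fun k _ => ?_
    rw [integral_const_mul]
    congr 1
    rw [heq3 k, integral_sub (hmixB 0 k).1 (hmixB (-δ) k).1, (hmixB 0 k).2, (hmixB (-δ) k).2,
      ← vB k, ← vB' k]
  have iF4 : Integrable (fun ω => ∑ k, ∑ l, (H i k * H j l)
      * ((∫ s in (t - δ)..t, x k s ω) * ∫ v in (-δ)..0, x l v ω)) μ :=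
    integrable_finset_sum _ fun k _ =>
      integrable_finset_sum _ fun l _ => ((hdbl k l).1.const_mul _)
  have vF4 : ∫ ω, (∑ k, ∑ l, (H i k * H j l)
      * ((∫ s in (t - δ)..t, x k s ω) * ∫ v in (-δ)..0, x l v ω)) ∂μ
      = ∑ k, ∑ l, (H i k * H j l) * ((∫ u in (t - δ)..t, (u - t + δ) * γ u k l)
        + ∫ u in t..(t + δ), (t - u + δ) * γ u k l) := by
    rw [integral_finset_sum _ fun k _ =>
      integrable_finset_sum _ fun l _ => ((hdbl k l).1.const_mul _)]
    refine Finset.sum_congr rfl fun k _ => ?_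
    rw [integral_finset_sum _ fun l _ => ((hdbl k l).1.const_mul _)]
    refine Finset.sum_congr rfl fun l _ => ?_
    rw [integral_const_mul]
    congr 1
    rw [(hdbl k l).2, vD k l]
  have hINT : ∫ ω, (G t ω - G (t - δ) ω) i * (G 0 ω - G (-δ) ω) j ∂μ
      = (2 * γ t i j - γ (t + δ) i j - γ (t - δ) i j)
        + (∑ l, H j l * ((∫ u in t..(t + δ), γ u i l) - ∫ u in (t - δ)..t, γ u i l))
        + (∑ k, H i k * ((∫ s in (t - δ)..t, γ s k j) - ∫ u in t..(t + δ), γ u k j))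
        + ∑ k, ∑ l, (H i k * H j l) * ((∫ u in (t - δ)..t, (u - t + δ) * γ u k l)
          + ∫ u in t..(t + δ), (t - u + δ) * γ u k l) := by
    have iS12 : Integrable (fun ω => (x i t ω - x i (t - δ) ω) * (x j 0 ω - x j (-δ) ω)
        + ∑ l, H j l * ((x i t ω - x i (t - δ) ω) * ∫ v in (-δ)..0, x l v ω)) μ := iF1.add iF2
    have iS123 : Integrable (fun ω => (x i t ω - x i (t - δ) ω) * (x j 0 ω - x j (-δ) ω)
        + (∑ l, H j l * ((x i t ω - x i (t - δ) ω) * ∫ v in (-δ)..0, x l v ω))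
        + ∑ k, H i k * ((x j 0 ω - x j (-δ) ω) * ∫ s in (t - δ)..t, x k s ω)) μ := iS12.add iF3
    rw [integral_congr_ae hpt]
    rw [integral_add iS123 iF4, integral_add iS12 iF3,
      integral_add iF1 iF2, vF1, vF2, vF3, vF4]
  rw [hINT]
  simp only [Matrix.add_apply, Matrix.sub_apply, Matrix.smul_apply, smul_eq_mul,
    Matrix.mul_apply, Matrix.of_apply]
  have e2 : (∑ l, H j l * ((∫ u in t..(t + δ), γ u i l) - ∫ u in (t - δ)..t, γ u i l))
      = ∑ l, ((∫ u in t..(t + δ), γ u i l) - ∫ u in (t - δ)..t, γ u i l) * H l j :=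
    Finset.sum_congr rfl fun l _ => by rw [hHsym j l]; ring
  have e4 : (∑ k, ∑ l, (H i k * H j l) * ((∫ u in (t - δ)..t, (u - t + δ) * γ u k l)
        + ∫ u in t..(t + δ), (t - u + δ) * γ u k l))
      = ∑ l, (∑ k, H i k * ((∫ u in (t - δ)..t, (u - t + δ) * γ u k l)
        + ∫ u in t..(t + δ), (t - u + δ) * γ u k l)) * H l j := by
    rw [Finset.sum_comm]
    refine Finset.sum_congr rfl fun l _ => ?_
    rw [Finset.sum_mul]
    exact Finset.sum_congr rfl fun k _ => by rw [hHsym j l]; ring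
  rw [e2, e4]
end

section
/- Let H > 0 be a real number and let X = (X_t)_{t∈ℝ} be a centred, square-integrable one-dimensional strictly stationary process with continuous paths almost surely and autocovariance γ(t) = E[X_t X_0]. Define G_t = X_t − X_0 + H ∫_0^t X_s ds, and for δ > 0 set r_δ(t) = E[(G_t − G_{t−δ})(G_0 − G_{−δ})]. Then for every t ∈ ℝ and δ > 0: r_δ(t) = 2γ(t) − γ(t+δ) − γ(t−δ) + H² (∫_{t−δ}^t (s−t+δ) γ(s) ds + ∫_t^{t+δ} (t−s+δ) γ(s) ds); in particular the first-order terms in H vanish in the univariate case. -/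
set_option autoImplicit false

open MeasureTheory Filter Topology

variable {Ω : Type*}

/-- Equality of finite-dimensional distributions for one-dimensional
`ℝ`-indexed processes. -/
def SameFDDR1 [MeasurableSpace Ω] (μ : Measure Ω) (X Y : ℝ → Ω → ℝ) : Prop :=
  ∀ (m : ℕ) (t : Fin m → ℝ),
    μ.map (fun ω (i : Fin m) => X (t i) ω) = μ.map (fun ω (i : Fin m) => Y (t i) ω)

/-- Strict stationarity of a one-dimensional `ℝ`-indexed process. -/
def IsStationaryR1 [MeasurableSpace Ω] (μ : Measure Ω) (X : ℝ → Ω → ℝ) : Prop :=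
  ∀ s : ℝ, SameFDDR1 μ (fun t => X (t + s)) X

section Aux

open Set Function

/-- product of two L² functions is integrable -/
lemma stmt17_mulInt [MeasurableSpace Ω] {μ : Measure Ω}
    {f g : Ω → ℝ} (hf : MemLp f 2 μ) (hg : MemLp g 2 μ) :
    Integrable (fun ω => f ω * g ω) μ := by
  have h1 : Integrable (fun ω => ((f ω) ^ 2 + (g ω) ^ 2) / 2) μ :=
    (hf.integrable_sq.add hg.integrable_sq).div_const 2
  refine Integrable.mono' h1 (hf.1.mul hg.1) (Filter.Eventually.of_forall fun ω => ?_)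
  rw [Real.norm_eq_abs, abs_mul]
  nlinarith [abs_nonneg (f ω), abs_nonneg (g ω), sq_abs (f ω), sq_abs (g ω),
    sq_nonneg (|f ω| - |g ω|)]

/-- Fubini swap for a uniformly-L¹-bounded jointly measurable family. -/
lemma stmt17_swap {ι : Type*} [MeasurableSpace Ω] [MeasurableSpace ι]
    (μ : Measure Ω) [IsFiniteMeasure μ] (ρ : Measure ι) [IsFiniteMeasure ρ]
    (f : ι → Ω → ℝ) (hf : StronglyMeasurable (Function.uncurry f))
    (hsec : ∀ u, Integrable (f u) μ)
    (C : ℝ) (hC : ∀ u, ∫ ω, |f u ω| ∂μ ≤ C) :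
    Integrable (fun ω => ∫ u, f u ω ∂ρ) μ ∧
      ∫ ω, ∫ u, f u ω ∂ρ ∂μ = ∫ u, ∫ ω, f u ω ∂μ ∂ρ := by
  have hint : Integrable (Function.uncurry f) (ρ.prod μ) := by
    refine (integrable_prod_iff hf.aestronglyMeasurable).2 ⟨?_, ?_⟩
    · exact Filter.Eventually.of_forall fun u => hsec u
    · refine Integrable.mono' (integrable_const C)
        (hf.norm.integral_prod_right').aestronglyMeasurable
        (Filter.Eventually.of_forall fun u => ?_)
      rw [Real.norm_eq_abs, abs_of_nonneg (integral_nonneg fun ω => norm_nonneg _)]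
      simpa [Real.norm_eq_abs] using hC u
  constructor
  · exact hint.swap.integral_prod_left
  · exact (integral_integral_swap (f := fun ω u => f u ω) hint.swap)

lemma stmt17_vol_inter (c d a b : ℝ) :
    volume (Ico c d ∩ Ioc a b) = ENNReal.ofReal (min d b - max c a) := by
  apply le_antisymm
  · calc volume (Ico c d ∩ Ioc a b) ≤ volume (Icc (max c a) (min d b)) := by
          apply measure_mono
          rintro s ⟨⟨h1, h2⟩, h3, h4⟩
          exact ⟨max_le h1 h3.le, le_min h2.le h4⟩
        _ = ENNReal.ofReal (min d b - max c a) := Real.volume_Icc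
  · calc ENNReal.ofReal (min d b - max c a) = volume (Ioo (max c a) (min d b)) :=
          Real.volume_Ioo.symm
        _ ≤ volume (Ico c d ∩ Ioc a b) := by
          apply measure_mono
          rintro s ⟨h1, h2⟩
          refine ⟨⟨((le_max_left c a).trans_lt h1).le, h2.trans_le (min_le_left d b)⟩,
            (le_max_right c a).trans_lt h1, (h2.trans_le (min_le_right d b)).le⟩

lemma stmt17_tri (g : ℝ → ℝ) (hg : Measurable g) (C : ℝ) (hC : ∀ x, |g x| ≤ C)
    (a δ : ℝ) (hδ : 0 < δ) :
    (∫ s in a..(a + δ), ∫ v in s..(s + δ), g v) =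
      (∫ v in a..(a + δ), (v - a) * g v) + ∫ v in (a + δ)..(a + 2 * δ), (a + 2 * δ - v) * g v := by
  set F : ℝ × ℝ → ℝ := fun p => if p.1 < p.2 ∧ p.2 ≤ p.1 + δ then g p.2 else 0 with hF
  have hFm : StronglyMeasurable F := by
    apply Measurable.stronglyMeasurable
    exact Measurable.ite
      ((measurableSet_lt measurable_fst measurable_snd).inter
        (measurableSet_le measurable_snd (measurable_fst.add_const δ)))
      (hg.comp measurable_snd) measurable_const
  set ρ : Measure (ℝ × ℝ) := (volume.restrict (Ioc a (a + δ))).prod volume with hρ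
  have hCnn : 0 ≤ C := le_trans (abs_nonneg _) (hC 0)
  have hFsec : ∀ s : ℝ, (fun v => F (s, v)) = (Ioc s (s + δ)).indicator g := by
    intro s; funext v; simp [hF, Set.indicator_apply, Set.mem_Ioc]
  have hFint : Integrable F ρ := by
    refine (integrable_prod_iff hFm.aestronglyMeasurable).2 ⟨?_, ?_⟩
    · refine Filter.Eventually.of_forall fun s => ?_
      rw [hFsec s]
      rw [integrable_indicator_iff measurableSet_Ioc]
      exact Integrable.mono' (integrable_const C) hg.aestronglyMeasurable.restrict
        (Filter.Eventually.of_forall fun x => hC x)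
    · refine Integrable.mono' (integrable_const (C * δ))
        hFm.norm.integral_prod_right'.aestronglyMeasurable
        (Filter.Eventually.of_forall fun s => ?_)
      rw [Real.norm_eq_abs, abs_of_nonneg (integral_nonneg fun v => norm_nonneg _)]
      calc (∫ v, ‖F (s, v)‖) ≤ ∫ v, (Ioc s (s + δ)).indicator (fun _ => C) v := by
            apply integral_mono_of_nonneg (Filter.Eventually.of_forall fun v => norm_nonneg _)
            · rw [integrable_indicator_iff measurableSet_Ioc]
              exact integrableOn_const (by simp [Real.volume_Ioc])
            · refine Filter.Eventually.of_forall fun v => ?_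
              show ‖F (s, v)‖ ≤ _
              rw [congrFun (hFsec s) v]
              rcases Set.indicator_eq_zero_or_self (Ioc s (s + δ)) g v with h | h
              · rw [Real.norm_eq_abs, h, abs_zero]
                exact Set.indicator_nonneg (fun _ _ => hCnn) v
              · obtain hv | hv := em (v ∈ Ioc s (s + δ))
                · simpa [hv, Real.norm_eq_abs] using hC v
                · simp [Set.indicator_of_notMem hv]
        _ = C * δ := by
            rw [integral_indicator measurableSet_Ioc, setIntegral_const, smul_eq_mul,
              measureReal_def, Real.volume_Ioc, mul_comm]
            congr 1
            rw [ENNReal.toReal_ofReal (by linarith)]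
            ring
  have key : (∫ s in a..(a + δ), ∫ v in s..(s + δ), g v) =
      ∫ v, (∫ s in Ioc a (a + δ), F (s, v)) := by
    rw [intervalIntegral.integral_of_le (by linarith : a ≤ a + δ)]
    rw [← integral_prod_symm F hFint, integral_prod F hFint]
    apply setIntegral_congr_fun measurableSet_Ioc
    intro s _
    show (∫ v in s..(s + δ), g v) = ∫ y, F (s, y)
    rw [intervalIntegral.integral_of_le (by linarith : s ≤ s + δ), hFsec s,
      integral_indicator measurableSet_Ioc]
  have hsint : ∀ v : ℝ, (∫ s in Ioc a (a + δ), F (s, v)) =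
      g v * (ENNReal.ofReal (min v (a + δ) - max (v - δ) a)).toReal := by
    intro v
    have h1 : (fun s => F (s, v)) = (Ico (v - δ) v).indicator (fun _ => g v) := by
      funext s
      simp only [hF, Set.indicator_apply, Set.mem_Ico]
      refine if_congr ⟨fun h => ⟨by linarith [h.2], h.1⟩, fun h => ⟨h.2, by linarith [h.1]⟩⟩ rfl rfl
    rw [h1, integral_indicator measurableSet_Ico, Measure.restrict_restrict measurableSet_Ico,
      setIntegral_const, smul_eq_mul, mul_comm, measureReal_def, stmt17_vol_inter]
  have hptwise : (fun v => (∫ s in Ioc a (a + δ), F (s, v))) =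
      fun v => (Ioc a (a + δ)).indicator (fun v => (v - a) * g v) v
        + (Ioc (a + δ) (a + 2 * δ)).indicator (fun v => (a + 2 * δ - v) * g v) v := by
    funext v
    rw [hsint v]
    rcases le_or_gt v a with h1 | h1
    · have e1 : min v (a + δ) = v := min_eq_left (by linarith)
      have e2 : max (v - δ) a = a := max_eq_right (by linarith)
      rw [e1, e2, ENNReal.ofReal_of_nonpos (by linarith), ENNReal.toReal_zero,
        Set.indicator_of_notMem (by simp [Set.mem_Ioc]; intro h; linarith),
        Set.indicator_of_notMem (by simp [Set.mem_Ioc]; intro h; linarith)]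
      ring
    · rcases le_or_gt v (a + δ) with h2 | h2
      · have e1 : min v (a + δ) = v := min_eq_left h2
        have e2 : max (v - δ) a = a := max_eq_right (by linarith)
        rw [e1, e2, ENNReal.toReal_ofReal (by linarith),
          Set.indicator_of_mem (Set.mem_Ioc.2 ⟨h1, h2⟩),
          Set.indicator_of_notMem (by simp [Set.mem_Ioc]; intro h; linarith)]
        ring
      · rcases le_or_gt v (a + 2 * δ) with h3 | h3
        · have e1 : min v (a + δ) = a + δ := min_eq_right (by linarith)
          have e2 : max (v - δ) a = v - δ := max_eq_left (by linarith)
          rw [e1, e2, Set.indicator_of_notMem (by simp [Set.mem_Ioc]; intro h; linarith),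
            Set.indicator_of_mem (Set.mem_Ioc.2 ⟨h2, h3⟩)]
          have : a + δ - (v - δ) = a + 2 * δ - v := by ring
          rw [this, ENNReal.toReal_ofReal (by linarith)]
          ring
        · have e1 : min v (a + δ) = a + δ := min_eq_right (by linarith)
          have e2 : max (v - δ) a = v - δ := max_eq_left (by linarith)
          rw [e1, e2, ENNReal.ofReal_of_nonpos (by linarith), ENNReal.toReal_zero,
            Set.indicator_of_notMem (by simp [Set.mem_Ioc]; intro h; linarith),
            Set.indicator_of_notMem (by simp [Set.mem_Ioc]; intro h; linarith)]
          ring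
  have hint1 : Integrable ((Ioc a (a + δ)).indicator (fun v => (v - a) * g v)) volume := by
    rw [integrable_indicator_iff measurableSet_Ioc]
    refine Integrable.mono' (integrable_const (δ * C))
      ((measurable_id.sub_const a).mul hg).aestronglyMeasurable.restrict ?_
    rw [ae_restrict_iff' measurableSet_Ioc]
    refine Filter.Eventually.of_forall fun v hv => ?_
    rw [Real.norm_eq_abs, abs_mul]
    have h1 : |v - a| ≤ δ := by
      rw [abs_le]; constructor <;> [linarith [hv.1]; linarith [hv.2]]
    exact mul_le_mul h1 (hC v) (abs_nonneg _) (by linarith)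
  have hint2 : Integrable ((Ioc (a + δ) (a + 2 * δ)).indicator
      (fun v => (a + 2 * δ - v) * g v)) volume := by
    rw [integrable_indicator_iff measurableSet_Ioc]
    refine Integrable.mono' (integrable_const (δ * C))
      ((measurable_const.sub measurable_id).mul hg).aestronglyMeasurable.restrict ?_
    rw [ae_restrict_iff' measurableSet_Ioc]
    refine Filter.Eventually.of_forall fun v hv => ?_
    rw [Real.norm_eq_abs, abs_mul]
    have h1 : |a + 2 * δ - v| ≤ δ := by
      rw [abs_le]; constructor <;> [linarith [hv.2]; linarith [hv.1]]
    exact mul_le_mul h1 (hC v) (abs_nonneg _) (by linarith)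
  rw [key, hptwise, integral_add hint1 hint2,
    integral_indicator measurableSet_Ioc, integral_indicator measurableSet_Ioc,
    intervalIntegral.integral_of_le (by linarith : a ≤ a + δ),
    intervalIntegral.integral_of_le (by linarith : a + δ ≤ a + 2 * δ)]

end Aux

/-- in the univariate case (`H > 0` a real number), the noise
`G_t = X_t − X_0 + H ∫_0^t X_s ds` of a centred square-integrable strictly
stationary process `X` with a.s. continuous paths satisfies, for all `t ∈ ℝ`
and `δ > 0`,
`r_δ(t) = 2γ(t) − γ(t+δ) − γ(t−δ) + H² (∫_{t−δ}^t (s−t+δ)γ(s)ds + ∫_t^{t+δ} (t−s+δ)γ(s)ds)`;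
in particular the first-order terms in `H` vanish. -/
theorem stmt17 [MeasurableSpace Ω] (μ : Measure Ω) [IsProbabilityMeasure μ]
    (H : ℝ) (hH : 0 < H)
    (X : ℝ → Ω → ℝ)
    (hmX : ∀ t, Measurable (X t))
    (hpaths : ∀ᵐ ω ∂μ, Continuous fun s => X s ω)
    (hX : IsStationaryR1 μ X)
    (hcent : ∀ t : ℝ, ∫ ω, X t ω ∂μ = 0)
    (hL2X : ∀ t : ℝ, MemLp (X t) 2 μ)
    (γ : ℝ → ℝ)
    (hγ : ∀ t : ℝ, γ t = ∫ ω, X t ω * X 0 ω ∂μ)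
    (G : ℝ → Ω → ℝ)
    (hG : ∀ (t : ℝ) (ω : Ω), G t ω = X t ω - X 0 ω + H * ∫ s in (0 : ℝ)..t, X s ω)
    (r : ℝ → ℝ → ℝ)
    (hr : ∀ (δ t : ℝ), r δ t =
      ∫ ω, (G t ω - G (t - δ) ω) * (G 0 ω - G (-δ) ω) ∂μ) :
    ∀ (t δ : ℝ), 0 < δ →
      r δ t = 2 * γ t - γ (t + δ) - γ (t - δ)
        + H ^ 2 * ((∫ s in (t - δ)..t, (s - t + δ) * γ s)
            + ∫ s in t..(t + δ), (t - s + δ) * γ s) := by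
  intro t δ hδ
  classical
  -- a measurable null set outside which the paths are continuous
  have hnull : μ {ω | ¬ Continuous fun s => X s ω} = 0 := by
    rw [← MeasureTheory.ae_iff]; exact hpaths
  obtain ⟨S, hSsub, hSm, hS0⟩ := MeasureTheory.exists_measurable_superset_of_null hnull
  have hSc : ∀ᵐ ω ∂μ, ω ∉ S := by
    rw [MeasureTheory.ae_iff]
    simpa using hS0
  -- the modification with everywhere-continuous paths
  set X' : ℝ → Ω → ℝ := fun s ω => if ω ∈ S then 0 else X s ω with hX'
  have hX'm : ∀ s, Measurable (X' s) := fun s => Measurable.ite hSm measurable_const (hmX s)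
  have hX'eq : ∀ᵐ ω ∂μ, ∀ s, X' s ω = X s ω := by
    filter_upwards [hSc] with ω hω s
    simp [hX', hω]
  have hae : ∀ s, X' s =ᵐ[μ] X s := fun s => by
    filter_upwards [hX'eq] with ω h using h s
  have hX'cont : ∀ ω, Continuous fun s => X' s ω := by
    intro ω
    by_cases h : ω ∈ S
    · simpa [hX', h] using (continuous_const : Continuous fun _ : ℝ => (0 : ℝ))
    · have hc : Continuous fun s => X s ω := by
        by_contra hc
        exact h (hSsub hc)
      simpa [hX', h] using hc
  have hX'L2 : ∀ s, MemLp (X' s) 2 μ := fun s => (hL2X s).ae_eq (hae s).symm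
  have hsmX' : StronglyMeasurable (Function.uncurry X') :=
    stronglyMeasurable_uncurry_of_continuous_of_stronglyMeasurable hX'cont
      (fun s => (hX'm s).stronglyMeasurable)
  -- covariance identity from stationarity
  have cov : ∀ a b : ℝ, (∫ ω, X a ω * X b ω ∂μ) = γ (a - b) := by
    intro a b
    have h2 := hX b 2 ![a - b, 0]
    simp only [] at h2
    have hf : Measurable fun v : Fin 2 → ℝ => v 0 * v 1 :=
      (measurable_pi_apply 0).mul (measurable_pi_apply 1)
    have hma : AEMeasurable (fun ω (i : Fin 2) => X ((![a - b, 0] : Fin 2 → ℝ) i + b) ω) μ :=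
      (measurable_pi_lambda _ fun i => hmX _).aemeasurable
    have hmb : AEMeasurable (fun ω (i : Fin 2) => X ((![a - b, 0] : Fin 2 → ℝ) i) ω) μ :=
      (measurable_pi_lambda _ fun i => hmX _).aemeasurable
    have e1 : (∫ v : Fin 2 → ℝ, v 0 * v 1
          ∂(μ.map fun ω (i : Fin 2) => X ((![a - b, 0] : Fin 2 → ℝ) i + b) ω))
        = ∫ ω, X a ω * X b ω ∂μ := by
      rw [integral_map hma hf.aestronglyMeasurable]
      simp only [Matrix.cons_val_zero, Matrix.cons_val_one, Matrix.head_cons,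
        show a - b + b = a from by ring, zero_add]
    have e2 : (∫ v : Fin 2 → ℝ, v 0 * v 1
          ∂(μ.map fun ω (i : Fin 2) => X ((![a - b, 0] : Fin 2 → ℝ) i) ω))
        = γ (a - b) := by
      rw [integral_map hmb hf.aestronglyMeasurable, hγ (a - b)]
      simp only [Matrix.cons_val_zero, Matrix.cons_val_one, Matrix.head_cons]
    rw [← e1, h2, e2]
  have cov' : ∀ a b : ℝ, (∫ ω, X' a ω * X' b ω ∂μ) = γ (a - b) := by
    intro a b
    rw [← cov a b]
    exact integral_congr_ae ((hae a).mul (hae b))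
  -- uniform bounds
  have hsq : ∀ s : ℝ, (∫ ω, (X' s ω) ^ 2 ∂μ) = γ 0 := by
    intro s
    have h := cov' s s
    rw [sub_self] at h
    rw [← h]
    congr 1
    funext ω
    ring
  have habs : ∀ s u : ℝ, (∫ ω, |X' s ω * X' u ω| ∂μ) ≤ γ 0 := by
    intro s u
    have h1 : Integrable (fun ω => ((X' s ω) ^ 2 + (X' u ω) ^ 2) / 2) μ :=
      ((hX'L2 s).integrable_sq.add (hX'L2 u).integrable_sq).div_const 2
    calc (∫ ω, |X' s ω * X' u ω| ∂μ)
        ≤ ∫ ω, ((X' s ω) ^ 2 + (X' u ω) ^ 2) / 2 ∂μ := by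
          apply integral_mono_of_nonneg
            (Filter.Eventually.of_forall fun ω => abs_nonneg _) h1
          refine Filter.Eventually.of_forall fun ω => ?_
          show |X' s ω * X' u ω| ≤ ((X' s ω) ^ 2 + (X' u ω) ^ 2) / 2
          rw [abs_mul]
          nlinarith [sq_abs (X' s ω), sq_abs (X' u ω),
            sq_nonneg (|X' s ω| - |X' u ω|), abs_nonneg (X' s ω), abs_nonneg (X' u ω)]
      _ = γ 0 := by
          rw [integral_div, integral_add (hX'L2 s).integrable_sq (hX'L2 u).integrable_sq,
            hsq, hsq]
          ring
  have hγ0nn : 0 ≤ γ 0 := by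
    rw [← hsq 0]
    exact integral_nonneg fun ω => sq_nonneg _
  have hγbdd : ∀ x : ℝ, |γ x| ≤ γ 0 := by
    intro x
    have h := cov' x 0
    rw [sub_zero] at h
    rw [← h]
    calc |∫ ω, X' x ω * X' 0 ω ∂μ| ≤ ∫ ω, |X' x ω * X' 0 ω| ∂μ := by
          simpa only [Real.norm_eq_abs] using
            norm_integral_le_integral_norm (μ := μ) (fun ω => X' x ω * X' 0 ω)
      _ ≤ γ 0 := habs x 0
  have hγm : Measurable γ := by
    have h1 : StronglyMeasurable fun p : ℝ × Ω => X' p.1 p.2 * X' 0 p.2 :=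
      hsmX'.mul (((hX'm 0).stronglyMeasurable).comp_measurable measurable_snd)
    have h2 : StronglyMeasurable fun x : ℝ => ∫ ω, X' x ω * X' 0 ω ∂μ :=
      h1.integral_prod_right'
    have h3 : γ = fun x => ∫ ω, X' x ω * X' 0 ω ∂μ := by
      funext x
      rw [cov' x 0, sub_zero]
    rw [h3]
    exact h2.measurable
  have hbddII : ∀ (f : ℝ → ℝ), Measurable f → (∀ x, |f x| ≤ γ 0) →
      ∀ a b : ℝ, IntervalIntegrable f volume a b := by
    intro f hfm hfb a b
    rw [intervalIntegrable_iff]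
    have hvol : volume (Set.uIoc a b) < ⊤ := by
      rw [Set.uIoc]
      simp [Real.volume_Ioc]
    exact Integrable.mono' (integrableOn_const (C := γ 0) hvol.ne)
      hfm.aestronglyMeasurable.restrict
      (Filter.Eventually.of_forall fun x => by simpa [Real.norm_eq_abs] using hfb x)
  -- abbreviations
  set A' : Ω → ℝ := fun ω => X' t ω - X' (t - δ) ω with hA'
  set C' : Ω → ℝ := fun ω => X' 0 ω - X' (-δ) ω with hC'
  set B' : Ω → ℝ := fun ω => ∫ s in Set.Ioc (t - δ) t, X' s ω with hB'
  set D' : Ω → ℝ := fun ω => ∫ u in Set.Ioc (-δ) 0, X' u ω with hD'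
  have hA'L2 : MemLp A' 2 μ := (hX'L2 t).sub (hX'L2 (t - δ))
  have hC'L2 : MemLp C' 2 μ := (hX'L2 0).sub (hX'L2 (-δ))
  have hA'm : StronglyMeasurable A' := ((hX'm t).sub (hX'm (t - δ))).stronglyMeasurable
  have hC'm : StronglyMeasurable C' := ((hX'm 0).sub (hX'm (-δ))).stronglyMeasurable
  -- the cross term A'·D'
  obtain ⟨iAD0, eAD⟩ := stmt17_swap μ (volume.restrict (Set.Ioc (-δ) 0))
    (fun u ω => A' ω * X' u ω)
    (by exact (hA'm.comp_measurable measurable_snd).mul hsmX')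
    (fun u => stmt17_mulInt hA'L2 (hX'L2 u))
    (2 * γ 0)
    (by
      intro u
      have hint : Integrable
          (fun ω => |X' t ω * X' u ω| + |X' (t - δ) ω * X' u ω|) μ :=
        (stmt17_mulInt (hX'L2 t) (hX'L2 u)).abs.add
          (stmt17_mulInt (hX'L2 (t - δ)) (hX'L2 u)).abs
      calc (∫ ω, |A' ω * X' u ω| ∂μ)
          ≤ ∫ ω, |X' t ω * X' u ω| + |X' (t - δ) ω * X' u ω| ∂μ := by
            apply integral_mono_of_nonneg
              (Filter.Eventually.of_forall fun ω => abs_nonneg _) hint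
            refine Filter.Eventually.of_forall fun ω => ?_
            show |A' ω * X' u ω| ≤ |X' t ω * X' u ω| + |X' (t - δ) ω * X' u ω|
            have : A' ω * X' u ω = X' t ω * X' u ω - X' (t - δ) ω * X' u ω := by
              rw [hA']; ring
            rw [this]
            exact abs_sub _ _
        _ = (∫ ω, |X' t ω * X' u ω| ∂μ) + ∫ ω, |X' (t - δ) ω * X' u ω| ∂μ :=
            integral_add (stmt17_mulInt (hX'L2 t) (hX'L2 u)).abs
              (stmt17_mulInt (hX'L2 (t - δ)) (hX'L2 u)).abs
        _ ≤ γ 0 + γ 0 := add_le_add (habs t u) (habs (t - δ) u)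
        _ = 2 * γ 0 := by ring)
  have hADfun : (fun ω => ∫ u in Set.Ioc (-δ) 0, A' ω * X' u ω) = fun ω => A' ω * D' ω := by
    funext ω
    rw [hD']
    exact integral_const_mul _ _
  rw [hADfun] at iAD0 eAD
  -- the cross term B'·C'
  obtain ⟨iBC0, eBC⟩ := stmt17_swap μ (volume.restrict (Set.Ioc (t - δ) t))
    (fun s ω => X' s ω * C' ω)
    (by exact hsmX'.mul (hC'm.comp_measurable measurable_snd))
    (fun s => stmt17_mulInt (hX'L2 s) hC'L2)
    (2 * γ 0)
    (by
      intro s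
      have hint : Integrable
          (fun ω => |X' s ω * X' 0 ω| + |X' s ω * X' (-δ) ω|) μ :=
        (stmt17_mulInt (hX'L2 s) (hX'L2 0)).abs.add
          (stmt17_mulInt (hX'L2 s) (hX'L2 (-δ))).abs
      calc (∫ ω, |X' s ω * C' ω| ∂μ)
          ≤ ∫ ω, |X' s ω * X' 0 ω| + |X' s ω * X' (-δ) ω| ∂μ := by
            apply integral_mono_of_nonneg
              (Filter.Eventually.of_forall fun ω => abs_nonneg _) hint
            refine Filter.Eventually.of_forall fun ω => ?_
            show |X' s ω * C' ω| ≤ |X' s ω * X' 0 ω| + |X' s ω * X' (-δ) ω|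
            have : X' s ω * C' ω = X' s ω * X' 0 ω - X' s ω * X' (-δ) ω := by
              rw [hC']; ring
            rw [this]
            exact abs_sub _ _
        _ = (∫ ω, |X' s ω * X' 0 ω| ∂μ) + ∫ ω, |X' s ω * X' (-δ) ω| ∂μ :=
            integral_add (stmt17_mulInt (hX'L2 s) (hX'L2 0)).abs
              (stmt17_mulInt (hX'L2 s) (hX'L2 (-δ))).abs
        _ ≤ γ 0 + γ 0 := add_le_add (habs s 0) (habs s (-δ))
        _ = 2 * γ 0 := by ring)
  have hBCfun : (fun ω => ∫ s in Set.Ioc (t - δ) t, X' s ω * C' ω) = fun ω => B' ω * C' ω := by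
    funext ω
    rw [hB']
    exact integral_mul_const _ _
  rw [hBCfun] at iBC0 eBC
  -- the quadratic term B'·D'
  have hsm4 : StronglyMeasurable
      (Function.uncurry fun (p : ℝ × ℝ) (ω : Ω) => X' p.1 ω * X' p.2 ω) := by
    exact (hsmX'.comp_measurable
        ((measurable_fst.fst).prodMk measurable_snd)).mul
      (hsmX'.comp_measurable ((measurable_fst.snd).prodMk measurable_snd))
  obtain ⟨iBD0, eBD⟩ := stmt17_swap μ
    ((volume.restrict (Set.Ioc (t - δ) t)).prod (volume.restrict (Set.Ioc (-δ) 0)))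
    (fun p ω => X' p.1 ω * X' p.2 ω)
    hsm4
    (fun p => stmt17_mulInt (hX'L2 p.1) (hX'L2 p.2))
    (γ 0)
    (fun p => habs p.1 p.2)
  have hBDfun' : (fun ω => ∫ p, X' p.1 ω * X' p.2 ω
      ∂((volume.restrict (Set.Ioc (t - δ) t)).prod (volume.restrict (Set.Ioc (-δ) 0))))
      = fun ω => B' ω * D' ω := by
    funext ω
    exact integral_prod_mul (fun s => X' s ω) (fun u => X' u ω)
  rw [hBDfun'] at iBD0 eBD
  -- the interval-integrability facts we shall need
  have hγii := hbddII γ hγm hγbdd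
  have hγii1 := hbddII (fun u => γ (t - u)) (hγm.comp (measurable_const.sub measurable_id))
    (fun x => hγbdd _)
  have hγii2 := hbddII (fun u => γ (t - δ - u)) (hγm.comp (measurable_const.sub measurable_id))
    (fun x => hγbdd _)
  have hγii3 := hbddII (fun s => γ (s + δ)) (hγm.comp (measurable_id.add_const δ))
    (fun x => hγbdd _)
  -- value of the cross term A'·D'
  have vAD : (∫ ω, A' ω * D' ω ∂μ)
      = (∫ v in t..(t + δ), γ v) - ∫ v in (t - δ)..t, γ v := by
    rw [eAD]
    have hin : ∀ u : ℝ, (∫ ω, A' ω * X' u ω ∂μ) = γ (t - u) - γ (t - δ - u) := by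
      intro u
      have h1 : (fun ω => A' ω * X' u ω)
          = fun ω => X' t ω * X' u ω - X' (t - δ) ω * X' u ω := by
        funext ω
        rw [hA']
        ring
      rw [h1, integral_sub (stmt17_mulInt (hX'L2 t) (hX'L2 u))
        (stmt17_mulInt (hX'L2 (t - δ)) (hX'L2 u)), cov', cov']
    calc (∫ u in Set.Ioc (-δ) 0, ∫ ω, A' ω * X' u ω ∂μ)
        = ∫ u in Set.Ioc (-δ) 0, (γ (t - u) - γ (t - δ - u)) := by
          apply setIntegral_congr_fun measurableSet_Ioc
          intro u _
          exact hin u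
      _ = ∫ u in (-δ)..0, (γ (t - u) - γ (t - δ - u)) :=
          (intervalIntegral.integral_of_le (by linarith : -δ ≤ 0)).symm
      _ = (∫ u in (-δ)..0, γ (t - u)) - ∫ u in (-δ)..0, γ (t - δ - u) :=
          intervalIntegral.integral_sub (hγii1 _ _) (hγii2 _ _)
      _ = (∫ v in t..(t + δ), γ v) - ∫ v in (t - δ)..t, γ v := by
          rw [intervalIntegral.integral_comp_sub_left γ t,
            intervalIntegral.integral_comp_sub_left γ (t - δ)]
          norm_num
  -- value of the cross term B'·C'
  have vBC : (∫ ω, B' ω * C' ω ∂μ)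
      = (∫ v in (t - δ)..t, γ v) - ∫ v in t..(t + δ), γ v := by
    rw [eBC]
    have hin : ∀ s : ℝ, (∫ ω, X' s ω * C' ω ∂μ) = γ s - γ (s + δ) := by
      intro s
      have h1 : (fun ω => X' s ω * C' ω)
          = fun ω => X' s ω * X' 0 ω - X' s ω * X' (-δ) ω := by
        funext ω
        rw [hC']
        ring
      rw [h1, integral_sub (stmt17_mulInt (hX'L2 s) (hX'L2 0))
        (stmt17_mulInt (hX'L2 s) (hX'L2 (-δ))), cov', cov', sub_zero, sub_neg_eq_add]
    calc (∫ s in Set.Ioc (t - δ) t, ∫ ω, X' s ω * C' ω ∂μ)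
        = ∫ s in Set.Ioc (t - δ) t, (γ s - γ (s + δ)) := by
          apply setIntegral_congr_fun measurableSet_Ioc
          intro s _
          exact hin s
      _ = ∫ s in (t - δ)..t, (γ s - γ (s + δ)) :=
          (intervalIntegral.integral_of_le (by linarith : t - δ ≤ t)).symm
      _ = (∫ s in (t - δ)..t, γ s) - ∫ s in (t - δ)..t, γ (s + δ) :=
          intervalIntegral.integral_sub (hγii _ _) (hγii3 _ _)
      _ = (∫ v in (t - δ)..t, γ v) - ∫ v in t..(t + δ), γ v := by
          rw [intervalIntegral.integral_comp_add_right γ δ]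
          norm_num
  -- value of the quadratic term B'·D'
  have vBD : (∫ ω, B' ω * D' ω ∂μ)
      = (∫ s in (t - δ)..t, (s - t + δ) * γ s) + ∫ s in t..(t + δ), (t - s + δ) * γ s := by
    rw [eBD]
    have hγprodInt : Integrable (fun p : ℝ × ℝ => γ (p.1 - p.2))
        ((volume.restrict (Set.Ioc (t - δ) t)).prod (volume.restrict (Set.Ioc (-δ) 0))) := by
      refine Integrable.mono' (integrable_const (γ 0))
        ((hγm.comp (measurable_fst.sub measurable_snd)).aestronglyMeasurable)
        (Filter.Eventually.of_forall fun p => ?_)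
      simpa [Real.norm_eq_abs] using hγbdd (p.1 - p.2)
    have tri' := stmt17_tri γ hγm (γ 0) hγbdd (t - δ) δ hδ
    simp only [show t - δ + δ = t from by ring, show t - δ + 2 * δ = t + δ from by ring,
      show ∀ v : ℝ, v - (t - δ) = v - t + δ from fun v => by ring,
      show ∀ v : ℝ, t - δ + 2 * δ - v = t - v + δ from fun v => by ring] at tri'
    calc (∫ p, ∫ ω, X' p.1 ω * X' p.2 ω ∂μ
          ∂((volume.restrict (Set.Ioc (t - δ) t)).prod (volume.restrict (Set.Ioc (-δ) 0))))
        = ∫ p, γ (p.1 - p.2)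
          ∂((volume.restrict (Set.Ioc (t - δ) t)).prod (volume.restrict (Set.Ioc (-δ) 0))) :=
          integral_congr_ae (Filter.Eventually.of_forall fun p => cov' p.1 p.2)
      _ = ∫ s in Set.Ioc (t - δ) t, ∫ u in Set.Ioc (-δ) 0, γ (s - u) := by
          rw [integral_prod _ hγprodInt]
      _ = ∫ s in Set.Ioc (t - δ) t, ∫ v in s..(s + δ), γ v := by
          apply setIntegral_congr_fun measurableSet_Ioc
          intro s _
          show (∫ u in Set.Ioc (-δ) 0, γ (s - u)) = ∫ v in s..(s + δ), γ v
          rw [← intervalIntegral.integral_of_le (by linarith : -δ ≤ 0),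
            intervalIntegral.integral_comp_sub_left γ s]
          norm_num
      _ = ∫ s in (t - δ)..t, ∫ v in s..(s + δ), γ v :=
          (intervalIntegral.integral_of_le (by linarith : t - δ ≤ t)).symm
      _ = (∫ s in (t - δ)..t, (s - t + δ) * γ s) + ∫ s in t..(t + δ), (t - s + δ) * γ s := by
          rw [tri']
          simp only [show ∀ v : ℝ, t + δ - v = t - v + δ from fun v => by ring]
  -- value of the product term A'·C'
  have m1 := stmt17_mulInt (hX'L2 t) (hX'L2 0)
  have m2 := stmt17_mulInt (hX'L2 t) (hX'L2 (-δ))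
  have m3 := stmt17_mulInt (hX'L2 (t - δ)) (hX'L2 0)
  have m4 := stmt17_mulInt (hX'L2 (t - δ)) (hX'L2 (-δ))
  have iAC : Integrable (fun ω => A' ω * C' ω) μ := stmt17_mulInt hA'L2 hC'L2
  have vAC : (∫ ω, A' ω * C' ω ∂μ) = 2 * γ t - γ (t + δ) - γ (t - δ) := by
    have h1 : (fun ω => A' ω * C' ω)
        = fun ω => X' t ω * X' 0 ω - X' t ω * X' (-δ) ω
          - X' (t - δ) ω * X' 0 ω + X' (t - δ) ω * X' (-δ) ω := by
      funext ω
      rw [hA', hC']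
      ring
    have i12 : Integrable (fun ω => X' t ω * X' 0 ω - X' t ω * X' (-δ) ω) μ := m1.sub m2
    have i123 : Integrable (fun ω => X' t ω * X' 0 ω - X' t ω * X' (-δ) ω
        - X' (t - δ) ω * X' 0 ω) μ := i12.sub m3
    rw [h1, integral_add i123 m4, integral_sub i12 m3,
      integral_sub m1 m2, cov', cov', cov', cov']
    simp only [show t - (0:ℝ) = t from by ring, show t - -δ = t + δ from by ring,
      show t - δ - (0:ℝ) = t - δ from by ring, show t - δ - -δ = t from by ring]
    ring
  -- identification of the increments of `G`
  have hX'ii : ∀ (ω : Ω) (a b : ℝ), IntervalIntegrable (fun s => X' s ω) volume a b :=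
    fun ω a b => (hX'cont ω).intervalIntegrable a b
  have hGd : ∀ᵐ ω ∂μ, (G t ω - G (t - δ) ω) * (G 0 ω - G (-δ) ω)
      = (A' ω + H * B' ω) * (C' ω + H * D' ω) := by
    filter_upwards [hX'eq] with ω hω
    have hXeqInt : ∀ a b : ℝ, (∫ s in a..b, X s ω) = ∫ s in a..b, X' s ω :=
      fun a b => intervalIntegral.integral_congr fun s _ => (hω s).symm
    have hBo : (∫ s in (0:ℝ)..t, X s ω) - ∫ s in (0:ℝ)..(t - δ), X s ω = B' ω := by
      rw [hXeqInt, hXeqInt,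
        intervalIntegral.integral_interval_sub_left (hX'ii ω 0 t) (hX'ii ω 0 (t - δ)), hB',
        intervalIntegral.integral_of_le (by linarith : t - δ ≤ t)]
    have hDo : (∫ s in (0:ℝ)..(0:ℝ), X s ω) - ∫ s in (0:ℝ)..(-δ), X s ω = D' ω := by
      rw [hXeqInt, hXeqInt,
        intervalIntegral.integral_interval_sub_left (hX'ii ω 0 0) (hX'ii ω 0 (-δ)), hD',
        intervalIntegral.integral_of_le (by linarith : -δ ≤ 0)]
    have e1 : G t ω - G (t - δ) ω = A' ω + H * B' ω := by
      rw [hG t ω, hG (t - δ) ω, ← hBo]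
      simp only [hA', hω]
      ring
    have e2 : G 0 ω - G (-δ) ω = C' ω + H * D' ω := by
      rw [hG 0 ω, hG (-δ) ω, ← hDo]
      simp only [hC', hω]
      ring
    rw [e1, e2]
  -- putting everything together
  have hrEq : r δ t = ∫ ω, (A' ω + H * B' ω) * (C' ω + H * D' ω) ∂μ := by
    rw [hr]
    exact integral_congr_ae hGd
  have hexp : (fun ω => (A' ω + H * B' ω) * (C' ω + H * D' ω))
      = fun ω => A' ω * C' ω + H * (A' ω * D' ω) + H * (B' ω * C' ω)
        + H ^ 2 * (B' ω * D' ω) := by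
    funext ω
    ring
  have j0 : Integrable (fun ω => H * (A' ω * D' ω)) μ := iAD0.const_mul H
  have j0' : Integrable (fun ω => H * (B' ω * C' ω)) μ := iBC0.const_mul H
  have j0'' : Integrable (fun ω => H ^ 2 * (B' ω * D' ω)) μ := iBD0.const_mul (H ^ 2)
  have j1 : Integrable (fun ω => A' ω * C' ω + H * (A' ω * D' ω)) μ := iAC.add j0
  have j2 : Integrable (fun ω => A' ω * C' ω + H * (A' ω * D' ω)
      + H * (B' ω * C' ω)) μ := j1.add j0'
  rw [hrEq, hexp,
    integral_add j2 j0'', integral_add j1 j0', integral_add iAC j0,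
    integral_const_mul, integral_const_mul, integral_const_mul, vAC, vAD, vBC, vBD]
  ring
end

section
/- Let H be an n×n symmetric positive definite matrix and let X = (X_t)_{t∈ℝ} be a centred, square-integrable strictly stationary n-dimensional process with continuous paths almost surely and autocovariance γ(s) = E[X_s X_0ᵀ] (so γ(−s) = γ(s)ᵀ). Define G_t = X_t − X_0 + H ∫_0^t X_s ds and v(t) = E[G_t G_tᵀ]. With B_t = ∫_0^t (γ(s) − γ(s)ᵀ) ds, C_t = ∫_0^t ∫_0^t γ(s−u) du ds, and D_t = v(t) − 2γ(0) + γ(t) + γ(t)ᵀ, the continuous-time algebraic Riccati equation B_tᵀ H + H B_t − H C_t H + D_t = 0 holds for every t ≥ 0. -/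
set_option autoImplicit false

open MeasureTheory Filter Finset Matrix Topology

variable {Ω : Type*}

private lemma abs_mul_le_sq_add_sq' (a b : ℝ) : ‖a * b‖ ≤ a ^ 2 + b ^ 2 := by
  rw [Real.norm_eq_abs, abs_mul]
  nlinarith [sq_nonneg (|a| - |b|), sq_abs a, sq_abs b, abs_nonneg a, abs_nonneg b,
    mul_nonneg (abs_nonneg a) (abs_nonneg b)]

/-- continuous-time algebraic Riccati equation.  For a centred
square-integrable strictly stationary `X` with a.s. continuous paths satisfying
the integrated Langevin equation with noise `G_t = X_t − X_0 + H ∫_0^t X_s ds`,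
the matrices `B_t = ∫_0^t (γ(s) − γ(s)ᵀ) ds`, `C_t = ∫_0^t ∫_0^t γ(s−u) du ds`
and `D_t = v(t) − 2γ(0) + γ(t) + γ(t)ᵀ` satisfy
`B_tᵀ H + H B_t − H C_t H + D_t = 0` for every `t ≥ 0`. -/
theorem stmt18 {n : ℕ} [MeasurableSpace Ω] (μ : Measure Ω) [IsProbabilityMeasure μ]
    (H : Matrix (Fin n) (Fin n) ℝ) (hH : H.PosDef)
    (X : ℝ → Ω → (Fin n → ℝ))
    (hmX : ∀ t, Measurable (X t))
    (hpaths : ∀ᵐ ω ∂μ, Continuous fun s => X s ω)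
    (hX : IsStationaryR μ X)
    (hcent : ∀ (t : ℝ) (i : Fin n), ∫ ω, X t ω i ∂μ = 0)
    (hL2X : ∀ (t : ℝ) (i : Fin n), MemLp (fun ω => X t ω i) 2 μ)
    (γ : ℝ → Matrix (Fin n) (Fin n) ℝ)
    (hγ : ∀ t : ℝ, γ t = Matrix.of fun i j => ∫ ω, X t ω i * X 0 ω j ∂μ)
    (G : ℝ → Ω → (Fin n → ℝ))
    (hG : ∀ (t : ℝ) (ω : Ω), G t ω =
      X t ω - X 0 ω + H.mulVec (fun i => ∫ s in (0 : ℝ)..t, X s ω i))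
    (v : ℝ → Matrix (Fin n) (Fin n) ℝ)
    (hv : ∀ t : ℝ, v t = Matrix.of fun i j => ∫ ω, G t ω i * G t ω j ∂μ)
    (B C D : ℝ → Matrix (Fin n) (Fin n) ℝ)
    (hB : ∀ t : ℝ, B t = Matrix.of fun i j => ∫ s in (0 : ℝ)..t, (γ s i j - γ s j i))
    (hC : ∀ t : ℝ, C t = Matrix.of fun i j =>
      ∫ s in (0 : ℝ)..t, ∫ u in (0 : ℝ)..t, γ (s - u) i j)
    (hD : ∀ t : ℝ, D t = v t - (2 : ℝ) • γ 0 + γ t + (γ t)ᵀ) :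
    ∀ t : ℝ, 0 ≤ t → (B t)ᵀ * H + H * B t - H * C t * H + D t = 0 := by

  intro t ht
  classical
  -- measurability of components
  have hXm : ∀ (s : ℝ) (k : Fin n), Measurable fun ω => X s ω k :=
    fun s k => (measurable_pi_apply k).comp (hmX s)
  -- covariance identity from stationarity
  have hcov : ∀ (a b : ℝ) (i j : Fin n), ∫ ω, X a ω i * X b ω j ∂μ = γ (a - b) i j := by
    intro a b i j
    have hmap := hX b 2 ![a - b, 0]
    have hφ1 : Measurable fun ω (m : Fin 2) => X (![a - b, 0] m + b) ω :=
      measurable_pi_lambda _ fun m => hmX _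
    have hφ2 : Measurable fun ω (m : Fin 2) => X (![a - b, 0] m) ω :=
      measurable_pi_lambda _ fun m => hmX _
    have hfm : Measurable fun y : Fin 2 → Fin n → ℝ => y 0 i * y 1 j :=
      Measurable.mul (f := fun y : Fin 2 → Fin n → ℝ => y 0 i) (g := fun y => y 1 j)
        ((measurable_pi_apply i).comp (measurable_pi_apply 0))
        ((measurable_pi_apply j).comp (measurable_pi_apply 1))
    have h1 : ∫ ω, X a ω i * X b ω j ∂μ
        = ∫ y : Fin 2 → Fin n → ℝ, y 0 i * y 1 j
            ∂(μ.map fun ω (m : Fin 2) => X (![a - b, 0] m + b) ω) := by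
      rw [integral_map hφ1.aemeasurable hfm.aestronglyMeasurable]
      simp
    rw [h1, hmap, integral_map hφ2.aemeasurable hfm.aestronglyMeasurable, hγ (a - b)]
    simp
  have hsym : ∀ (s : ℝ) (i j : Fin n), γ (-s) i j = γ s j i := by
    intro s i j
    have h1 := hcov 0 s i j
    have h2 := hcov s 0 j i
    rw [zero_sub] at h1
    rw [sub_zero] at h2
    rw [← h1, ← h2]
    exact integral_congr_ae (Filter.Eventually.of_forall fun ω => mul_comm _ _)
  -- basic integrability
  have hsq : ∀ (s : ℝ) (k : Fin n), Integrable (fun ω => X s ω k ^ 2) μ :=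
    fun s k => (hL2X s k).integrable_sq
  have hmulint : ∀ (a b : ℝ) (i j : Fin n), Integrable (fun ω => X a ω i * X b ω j) μ :=
    fun a b i j => Integrable.mono' ((hsq a i).add (hsq b j))
      (((hXm a i).mul (hXm b j)).aestronglyMeasurable)
      (Filter.Eventually.of_forall fun ω => abs_mul_le_sq_add_sq' _ _)
  have hnormsq : ∀ (s : ℝ) (k : Fin n), ∫ ω, ‖X s ω k ^ 2‖ ∂μ = γ 0 k k := by
    intro s k
    have h1 : (fun ω => ‖X s ω k ^ 2‖) = fun ω => X s ω k * X s ω k := by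
      funext ω; rw [Real.norm_eq_abs, abs_of_nonneg (sq_nonneg _), sq]
    rw [h1, hcov s s k k, sub_self]
  -- modification with everywhere-continuous paths
  rw [ae_iff] at hpaths
  obtain ⟨N, hNsub, hNmeas, hNnull⟩ := exists_measurable_superset_of_null hpaths
  set Y : ℝ → Ω → Fin n → ℝ := fun s ω => if ω ∈ N then 0 else X s ω with hYdef
  have hYcont : ∀ ω, Continuous fun s => Y s ω := by
    intro ω
    by_cases hω : ω ∈ N
    · simpa [Y, hω] using continuous_const
    · have h1 : (fun s => Y s ω) = fun s => X s ω := by funext s; simp [Y, hω]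
      rw [h1]
      by_contra hc
      exact hω (hNsub hc)
  have hYm : ∀ s, Measurable (Y s) := fun s => Measurable.ite hNmeas measurable_const (hmX s)
  have hYU : Measurable (Function.uncurry Y) :=
    measurable_uncurry_of_continuous_of_measurable hYcont hYm
  -- the base interval measure
  set ν : Measure ℝ := volume.restrict (Set.Ioc 0 t) with hνdef
  haveI hνfin : IsFiniteMeasure ν := by
    constructor
    rw [hνdef, Measure.restrict_apply_univ, Real.volume_Ioc]
    exact ENNReal.ofReal_lt_top
  have hIoc : ∀ f : ℝ → ℝ, (∫ s in (0:ℝ)..t, f s) = ∫ s, f s ∂ν := by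
    intro f
    rw [intervalIntegral.integral_of_le ht, hνdef]
  -- product-null set
  have hnullprod : ∀ {δ : Type} [MeasurableSpace δ] (ρ : Measure δ) [SFinite ρ],
      (μ.prod ρ) {p : Ω × δ | p.1 ∈ N} = 0 := by
    intro δ mδ ρ hρ
    have h1 : {p : Ω × δ | p.1 ∈ N} = N ×ˢ (Set.univ : Set δ) := by ext p; simp
    rw [h1, Measure.prod_prod, hNnull, zero_mul]
  have haeN : ∀ {δ : Type} [MeasurableSpace δ] (ρ : Measure δ) [SFinite ρ],
      ∀ᵐ p : Ω × δ ∂(μ.prod ρ), p.1 ∉ N := by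
    intro δ mδ ρ hρ
    rw [ae_iff]
    have h1 : {p : Ω × δ | ¬ p.1 ∉ N} = {p : Ω × δ | p.1 ∈ N} := by ext p; simp
    rw [h1]; exact hnullprod ρ
  -- single-time swap
  have haesm1 : ∀ (a : ℝ) (i k : Fin n),
      AEStronglyMeasurable (Function.uncurry fun ω s => X a ω i * X s ω k) (μ.prod ν) := by
    intro a i k
    have hmeas : Measurable fun p : Ω × ℝ => X a p.1 i * Y p.2 p.1 k :=
      ((hXm a i).comp measurable_fst).mul
        ((measurable_pi_apply k).comp (hYU.comp (measurable_snd.prodMk measurable_fst)))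
    refine hmeas.aestronglyMeasurable.congr ?_
    filter_upwards [haeN ν] with p hp
    simp [Function.uncurry, Y, hp]
  have hsqprod1 : ∀ k : Fin n, Integrable (fun p : Ω × ℝ => X p.2 p.1 k ^ 2) (μ.prod ν) := by
    intro k
    have hmeas : Measurable fun p : Ω × ℝ => Y p.2 p.1 k ^ 2 :=
      ((measurable_pi_apply k).comp (hYU.comp (measurable_snd.prodMk measurable_fst))).pow_const 2
    have haesm : AEStronglyMeasurable (fun p : Ω × ℝ => X p.2 p.1 k ^ 2) (μ.prod ν) := by
      refine hmeas.aestronglyMeasurable.congr ?_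
      filter_upwards [haeN ν] with p hp
      simp [Y, hp]
    rw [integrable_prod_iff' haesm]
    refine ⟨Filter.Eventually.of_forall fun s => hsq s k, ?_⟩
    have h1 : (fun s => ∫ ω, ‖X s ω k ^ 2‖ ∂μ) = fun _ => γ 0 k k := by
      funext s; exact hnormsq s k
    rw [h1]
    exact integrable_const _
  have hint1 : ∀ (a : ℝ) (i k : Fin n),
      Integrable (Function.uncurry fun ω s => X a ω i * X s ω k) (μ.prod ν) := by
    intro a i k
    have hb : Integrable (fun p : Ω × ℝ => X a p.1 i ^ 2 + X p.2 p.1 k ^ 2) (μ.prod ν) := by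
      refine Integrable.add ?_ (hsqprod1 k)
      have h1 := (hsq a i).mul_prod (integrable_const (1:ℝ) (μ := ν))
      simpa using h1
    exact Integrable.mono' hb (haesm1 a i k)
      (Filter.Eventually.of_forall fun p => abs_mul_le_sq_add_sq' _ _)
  have hswap1 : ∀ (a : ℝ) (i k : Fin n),
      (∫ ω, X a ω i * (∫ s in (0:ℝ)..t, X s ω k) ∂μ) = ∫ s in (0:ℝ)..t, γ (a - s) i k := by
    intro a i k
    have h0 : ∀ ω, X a ω i * (∫ s in (0:ℝ)..t, X s ω k) = ∫ s, X a ω i * X s ω k ∂ν := by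
      intro ω
      rw [hIoc fun s => X s ω k]
      exact (integral_const_mul _ _).symm
    simp only [h0]
    rw [integral_integral_swap (hint1 a i k), hIoc fun s => γ (a - s) i k]
    simp only [hcov]
  have hintAI : ∀ (a : ℝ) (i k : Fin n),
      Integrable (fun ω => X a ω i * (∫ s in (0:ℝ)..t, X s ω k)) μ := by
    intro a i k
    have h1 := (hint1 a i k).integral_prod_left
    refine h1.congr (Filter.Eventually.of_forall fun ω => ?_)
    show (∫ s, X a ω i * X s ω k ∂ν) = X a ω i * ∫ s in (0:ℝ)..t, X s ω k
    rw [hIoc fun s => X s ω k]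
    exact integral_const_mul _ _
  -- integrability of s ↦ γ (a - s) i k on ν
  have hγint : ∀ (a : ℝ) (i k : Fin n), Integrable (fun s => γ (a - s) i k) ν := by
    intro a i k
    have h1 := (hint1 a i k).integral_prod_right
    refine h1.congr (Filter.Eventually.of_forall fun s => ?_)
    exact hcov a s i k
  -- double-time swap
  have haesm2 : ∀ (k l : Fin n),
      AEStronglyMeasurable (Function.uncurry fun ω (p : ℝ × ℝ) => X p.1 ω k * X p.2 ω l)
        (μ.prod (ν.prod ν)) := by
    intro k l
    have hmeas : Measurable fun q : Ω × (ℝ × ℝ) => Y q.2.1 q.1 k * Y q.2.2 q.1 l :=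
      ((measurable_pi_apply k).comp
          (hYU.comp ((measurable_fst.comp measurable_snd).prodMk measurable_fst))).mul
        ((measurable_pi_apply l).comp
          (hYU.comp ((measurable_snd.comp measurable_snd).prodMk measurable_fst)))
    refine hmeas.aestronglyMeasurable.congr ?_
    filter_upwards [haeN (ν.prod ν)] with q hq
    simp [Function.uncurry, Y, hq]
  have hsqprod2 : ∀ (k : Fin n) (e : ℝ × ℝ → ℝ), Measurable e →
      Integrable (fun q : Ω × (ℝ × ℝ) => X (e q.2) q.1 k ^ 2) (μ.prod (ν.prod ν)) := by
    intro k e he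
    have hmeas : Measurable fun q : Ω × (ℝ × ℝ) => Y (e q.2) q.1 k ^ 2 :=
      ((measurable_pi_apply k).comp
        (hYU.comp ((he.comp measurable_snd).prodMk measurable_fst))).pow_const 2
    have haesm : AEStronglyMeasurable (fun q : Ω × (ℝ × ℝ) => X (e q.2) q.1 k ^ 2)
        (μ.prod (ν.prod ν)) := by
      refine hmeas.aestronglyMeasurable.congr ?_
      filter_upwards [haeN (ν.prod ν)] with q hq
      simp [Y, hq]
    rw [integrable_prod_iff' haesm]
    refine ⟨Filter.Eventually.of_forall fun p => hsq (e p) k, ?_⟩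
    have h1 : (fun p : ℝ × ℝ => ∫ ω, ‖X (e p) ω k ^ 2‖ ∂μ) = fun _ => γ 0 k k := by
      funext p; exact hnormsq (e p) k
    rw [h1]
    exact integrable_const _
  have hint2 : ∀ (k l : Fin n),
      Integrable (Function.uncurry fun ω (p : ℝ × ℝ) => X p.1 ω k * X p.2 ω l)
        (μ.prod (ν.prod ν)) := by
    intro k l
    exact Integrable.mono'
      ((hsqprod2 k Prod.fst measurable_fst).add (hsqprod2 l Prod.snd measurable_snd))
      (haesm2 k l)
      (Filter.Eventually.of_forall fun q => abs_mul_le_sq_add_sq' _ _)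
  have hII : ∀ ω (k l : Fin n),
      (∫ s in (0:ℝ)..t, X s ω k) * (∫ u in (0:ℝ)..t, X u ω l)
        = ∫ s, (∫ u, X s ω k * X u ω l ∂ν) ∂ν := by
    intro ω k l
    rw [hIoc fun s => X s ω k, hIoc fun u => X u ω l, ← integral_mul_const]
    refine integral_congr_ae (Filter.Eventually.of_forall fun s => ?_)
    exact (integral_const_mul _ _).symm
  have hswap2 : ∀ (k l : Fin n),
      (∫ ω, (∫ s in (0:ℝ)..t, X s ω k) * (∫ u in (0:ℝ)..t, X u ω l) ∂μ)
        = ∫ s in (0:ℝ)..t, ∫ u in (0:ℝ)..t, γ (s - u) k l := by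
    intro k l
    have h1 : ∀ᵐ ω ∂μ, (∫ s in (0:ℝ)..t, X s ω k) * (∫ u in (0:ℝ)..t, X u ω l)
        = ∫ p, X p.1 ω k * X p.2 ω l ∂(ν.prod ν) := by
      filter_upwards [(hint2 k l).prod_right_ae] with ω hω
      rw [hII ω k l]
      exact (integral_prod _ hω).symm
    rw [integral_congr_ae h1]
    have h2 := integral_integral_swap (hint2 k l)
    rw [h2]
    have h3 : Integrable (fun p : ℝ × ℝ => γ (p.1 - p.2) k l) (ν.prod ν) := by
      have h4 := (hint2 k l).integral_prod_right
      refine h4.congr (Filter.Eventually.of_forall fun p => ?_)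
      exact hcov p.1 p.2 k l
    have h5 : (∫ p : ℝ × ℝ, (∫ ω, X p.1 ω k * X p.2 ω l ∂μ) ∂(ν.prod ν))
        = ∫ p : ℝ × ℝ, γ (p.1 - p.2) k l ∂(ν.prod ν) := by
      refine integral_congr_ae (Filter.Eventually.of_forall fun p => ?_)
      exact hcov p.1 p.2 k l
    rw [h5, integral_prod _ h3, hIoc fun s => ∫ u in (0:ℝ)..t, γ (s - u) k l]
    refine integral_congr_ae (Filter.Eventually.of_forall fun s => ?_)
    show (∫ u, γ (s - u) k l ∂ν) = ∫ u in (0:ℝ)..t, γ (s - u) k l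
    rw [hIoc fun u => γ (s - u) k l]
  have hintII : ∀ (k l : Fin n),
      Integrable (fun ω => (∫ s in (0:ℝ)..t, X s ω k) * (∫ u in (0:ℝ)..t, X u ω l)) μ := by
    intro k l
    have h1 := (hint2 k l).integral_prod_left
    refine h1.congr ?_
    filter_upwards [(hint2 k l).prod_right_ae] with ω hω
    rw [hII ω k l]
    exact integral_prod _ hω
  -- interval-integrable versions of γ
  have hiiγ1 : ∀ i k : Fin n, IntervalIntegrable (fun s => γ s i k) volume 0 t := by
    intro i k
    have h1 : IntervalIntegrable (fun s => γ (t - s) i k) volume 0 t :=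
      (intervalIntegrable_iff_integrableOn_Ioc_of_le ht).2 (hγint t i k)
    have h2 := h1.comp_sub_left t
    simp only [sub_self, sub_zero, sub_sub_cancel] at h2
    exact h2.symm
  have hiiγ2 : ∀ i k : Fin n, IntervalIntegrable (fun s => γ s k i) volume 0 t := by
    intro i k
    refine (intervalIntegrable_iff_integrableOn_Ioc_of_le ht).2 ?_
    refine (hγint 0 i k).congr ?_
    refine Filter.Eventually.of_forall fun s => ?_
    show γ (0 - s) i k = γ s k i
    rw [zero_sub, hsym]
  -- B entries
  have hBval : ∀ i k : Fin n,
      (∫ s in (0:ℝ)..t, γ (t - s) i k) - (∫ s in (0:ℝ)..t, γ (0 - s) i k) = B t i k := by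
    intro i k
    have h1 : (∫ s in (0:ℝ)..t, γ (t - s) i k) = ∫ s in (0:ℝ)..t, γ s i k := by
      have h0 := intervalIntegral.integral_comp_sub_left (a := 0) (b := t) (fun s => γ s i k) t
      simpa using h0
    have h2 : (∫ s in (0:ℝ)..t, γ (0 - s) i k) = ∫ s in (0:ℝ)..t, γ s k i := by
      refine intervalIntegral.integral_congr fun s _ => ?_
      rw [zero_sub, hsym]
    rw [h1, h2, hB]
    simp only [Matrix.of_apply]
    rw [intervalIntegral.integral_sub (hiiγ1 i k) (hiiγ2 i k)]
  have hBanti : ∀ i k : Fin n, B t k i = - B t i k := by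
    intro i k
    rw [hB]
    simp only [Matrix.of_apply]
    rw [← intervalIntegral.integral_neg]
    refine intervalIntegral.integral_congr fun s _ => ?_
    ring
  have hHsym : ∀ i k : Fin n, H k i = H i k := by
    intro i k
    have := hH.1.apply i k
    simpa using this
  -- expansion of v
  have hGi : ∀ (ω : Ω) (i : Fin n), G t ω i
      = (X t ω i - X 0 ω i) + ∑ k, H i k * (∫ s in (0:ℝ)..t, X s ω k) := by
    intro ω i
    rw [hG]
    simp [Matrix.mulVec, dotProduct]
  have hvij : ∀ i j : Fin n, v t i j
      = (γ 0 i j - γ t i j - γ t j i + γ 0 i j)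
        + (∑ l, H j l * B t i l) + (∑ k, H i k * B t j k)
        + ∑ k, ∑ l, H i k * H j l * C t k l := by
    intro i j
    have hpt : ∀ ω, G t ω i * G t ω j
        = (X t ω i * X t ω j - X t ω i * X 0 ω j - X 0 ω i * X t ω j + X 0 ω i * X 0 ω j)
          + (∑ l, H j l * ((X t ω i - X 0 ω i) * (∫ s in (0:ℝ)..t, X s ω l)))
          + (∑ k, H i k * ((X t ω j - X 0 ω j) * (∫ s in (0:ℝ)..t, X s ω k)))
          + ∑ k, ∑ l, H i k * H j l
              * ((∫ s in (0:ℝ)..t, X s ω k) * (∫ s in (0:ℝ)..t, X s ω l)) := by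
      intro ω
      rw [hGi ω i, hGi ω j]
      have e0 : ∀ A S A' S' : ℝ, (A + S) * (A' + S') = A * A' + A * S' + S * A' + S * S' :=
        fun A S A' S' => by ring
      rw [e0]
      have e1 : (X t ω i - X 0 ω i) * (∑ l, H j l * (∫ s in (0:ℝ)..t, X s ω l))
          = ∑ l, H j l * ((X t ω i - X 0 ω i) * (∫ s in (0:ℝ)..t, X s ω l)) := by
        rw [Finset.mul_sum]
        exact Finset.sum_congr rfl fun l _ => by ring
      have e2 : (∑ k, H i k * (∫ s in (0:ℝ)..t, X s ω k)) * (X t ω j - X 0 ω j)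
          = ∑ k, H i k * ((X t ω j - X 0 ω j) * (∫ s in (0:ℝ)..t, X s ω k)) := by
        rw [Finset.sum_mul]
        exact Finset.sum_congr rfl fun k _ => by ring
      have e3 : (∑ k, H i k * (∫ s in (0:ℝ)..t, X s ω k))
            * (∑ l, H j l * (∫ s in (0:ℝ)..t, X s ω l))
          = ∑ k, ∑ l, H i k * H j l
              * ((∫ s in (0:ℝ)..t, X s ω k) * (∫ s in (0:ℝ)..t, X s ω l)) := by
        rw [Finset.sum_mul]
        refine Finset.sum_congr rfl fun k _ => ?_
        rw [Finset.mul_sum]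
        exact Finset.sum_congr rfl fun l _ => by ring
      have e4 : (X t ω i - X 0 ω i) * (X t ω j - X 0 ω j)
          = X t ω i * X t ω j - X t ω i * X 0 ω j - X 0 ω i * X t ω j + X 0 ω i * X 0 ω j := by
        ring
      rw [e1, e2, e3, e4]
    -- integrability of the four groups
    have intT1 : Integrable (fun ω => X t ω i * X t ω j - X t ω i * X 0 ω j
        - X 0 ω i * X t ω j + X 0 ω i * X 0 ω j) μ :=
      (((hmulint t t i j).sub (hmulint t 0 i j)).sub (hmulint 0 t i j)).add (hmulint 0 0 i j)
    have intT2e : ∀ (i' : Fin n) (c : ℝ) (l : Fin n),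
        Integrable (fun ω => c * ((X t ω i' - X 0 ω i') * (∫ s in (0:ℝ)..t, X s ω l))) μ := by
      intro i' c l
      refine (((hintAI t i' l).sub (hintAI 0 i' l)).const_mul c).congr
        (Filter.Eventually.of_forall fun ω => ?_)
      simp only [Pi.sub_apply]
      ring
    have intT2 : Integrable (fun ω => ∑ l, H j l
        * ((X t ω i - X 0 ω i) * (∫ s in (0:ℝ)..t, X s ω l))) μ :=
      integrable_finset_sum _ fun l _ => intT2e i (H j l) l
    have intT3 : Integrable (fun ω => ∑ k, H i k
        * ((X t ω j - X 0 ω j) * (∫ s in (0:ℝ)..t, X s ω k))) μ :=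
      integrable_finset_sum _ fun k _ => intT2e j (H i k) k
    have intT4e : ∀ k l : Fin n, Integrable (fun ω => H i k * H j l
        * ((∫ s in (0:ℝ)..t, X s ω k) * (∫ s in (0:ℝ)..t, X s ω l))) μ :=
      fun k l => (hintII k l).const_mul _
    have intT4 : Integrable (fun ω => ∑ k, ∑ l, H i k * H j l
        * ((∫ s in (0:ℝ)..t, X s ω k) * (∫ s in (0:ℝ)..t, X s ω l))) μ :=
      integrable_finset_sum _ fun k _ => integrable_finset_sum _ fun l _ => intT4e k l
    -- values of the four groups
    have hT1 : ∫ ω, (X t ω i * X t ω j - X t ω i * X 0 ω j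
        - X 0 ω i * X t ω j + X 0 ω i * X 0 ω j) ∂μ
        = γ 0 i j - γ t i j - γ t j i + γ 0 i j := by
      have u1 : ∫ ω, (X t ω i * X t ω j - X t ω i * X 0 ω j - X 0 ω i * X t ω j
            + X 0 ω i * X 0 ω j) ∂μ
          = (∫ ω, (X t ω i * X t ω j - X t ω i * X 0 ω j - X 0 ω i * X t ω j) ∂μ)
            + ∫ ω, X 0 ω i * X 0 ω j ∂μ :=
        integral_add (((hmulint t t i j).sub (hmulint t 0 i j)).sub (hmulint 0 t i j))
          (hmulint 0 0 i j)
      have u2 : ∫ ω, (X t ω i * X t ω j - X t ω i * X 0 ω j - X 0 ω i * X t ω j) ∂μ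
          = (∫ ω, (X t ω i * X t ω j - X t ω i * X 0 ω j) ∂μ) - ∫ ω, X 0 ω i * X t ω j ∂μ :=
        integral_sub ((hmulint t t i j).sub (hmulint t 0 i j)) (hmulint 0 t i j)
      have u3 : ∫ ω, (X t ω i * X t ω j - X t ω i * X 0 ω j) ∂μ
          = (∫ ω, X t ω i * X t ω j ∂μ) - ∫ ω, X t ω i * X 0 ω j ∂μ :=
        integral_sub (hmulint t t i j) (hmulint t 0 i j)
      rw [u1, u2, u3, hcov t t i j, hcov t 0 i j, hcov 0 t i j, hcov 0 0 i j]
      simp only [sub_self, sub_zero, zero_sub, neg_zero]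
      rw [hsym t i j]
    have hT2 : ∫ ω, (∑ l, H j l * ((X t ω i - X 0 ω i) * (∫ s in (0:ℝ)..t, X s ω l))) ∂μ
        = ∑ l, H j l * B t i l := by
      rw [integral_finset_sum _ fun l _ => intT2e i (H j l) l]
      refine Finset.sum_congr rfl fun l _ => ?_
      have h1 : (fun ω => H j l * ((X t ω i - X 0 ω i) * (∫ s in (0:ℝ)..t, X s ω l)))
          = fun ω => H j l * (X t ω i * (∫ s in (0:ℝ)..t, X s ω l)
              - X 0 ω i * (∫ s in (0:ℝ)..t, X s ω l)) := by
        funext ω; ring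
      rw [h1, integral_const_mul, integral_sub (hintAI t i l) (hintAI 0 i l),
        hswap1 t i l, hswap1 0 i l, hBval i l]
    have hT3 : ∫ ω, (∑ k, H i k * ((X t ω j - X 0 ω j) * (∫ s in (0:ℝ)..t, X s ω k))) ∂μ
        = ∑ k, H i k * B t j k := by
      rw [integral_finset_sum _ fun k _ => intT2e j (H i k) k]
      refine Finset.sum_congr rfl fun k _ => ?_
      have h1 : (fun ω => H i k * ((X t ω j - X 0 ω j) * (∫ s in (0:ℝ)..t, X s ω k)))
          = fun ω => H i k * (X t ω j * (∫ s in (0:ℝ)..t, X s ω k)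
              - X 0 ω j * (∫ s in (0:ℝ)..t, X s ω k)) := by
        funext ω; ring
      rw [h1, integral_const_mul, integral_sub (hintAI t j k) (hintAI 0 j k),
        hswap1 t j k, hswap1 0 j k, hBval j k]
    have hT4 : ∫ ω, (∑ k, ∑ l, H i k * H j l
        * ((∫ s in (0:ℝ)..t, X s ω k) * (∫ s in (0:ℝ)..t, X s ω l))) ∂μ
        = ∑ k, ∑ l, H i k * H j l * C t k l := by
      rw [integral_finset_sum _ fun k _ => integrable_finset_sum _ fun l _ => intT4e k l]
      refine Finset.sum_congr rfl fun k _ => ?_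
      rw [integral_finset_sum _ fun l _ => intT4e k l]
      refine Finset.sum_congr rfl fun l _ => ?_
      rw [integral_const_mul, hswap2 k l, hC]
      rfl
    have hsplit : ∫ ω, G t ω i * G t ω j ∂μ
        = ∫ ω, ((X t ω i * X t ω j - X t ω i * X 0 ω j - X 0 ω i * X t ω j + X 0 ω i * X 0 ω j)
          + (∑ l, H j l * ((X t ω i - X 0 ω i) * (∫ s in (0:ℝ)..t, X s ω l)))
          + (∑ k, H i k * ((X t ω j - X 0 ω j) * (∫ s in (0:ℝ)..t, X s ω k)))
          + ∑ k, ∑ l, H i k * H j l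
              * ((∫ s in (0:ℝ)..t, X s ω k) * (∫ s in (0:ℝ)..t, X s ω l))) ∂μ :=
      integral_congr_ae (Filter.Eventually.of_forall hpt)
    rw [hv]
    simp only [Matrix.of_apply]
    have s1 : ∫ ω, ((X t ω i * X t ω j - X t ω i * X 0 ω j - X 0 ω i * X t ω j
            + X 0 ω i * X 0 ω j)
          + (∑ l, H j l * ((X t ω i - X 0 ω i) * (∫ s in (0:ℝ)..t, X s ω l)))
          + (∑ k, H i k * ((X t ω j - X 0 ω j) * (∫ s in (0:ℝ)..t, X s ω k)))
          + ∑ k, ∑ l, H i k * H j l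
              * ((∫ s in (0:ℝ)..t, X s ω k) * (∫ s in (0:ℝ)..t, X s ω l))) ∂μ
        = (∫ ω, ((X t ω i * X t ω j - X t ω i * X 0 ω j - X 0 ω i * X t ω j
            + X 0 ω i * X 0 ω j)
          + (∑ l, H j l * ((X t ω i - X 0 ω i) * (∫ s in (0:ℝ)..t, X s ω l)))
          + (∑ k, H i k * ((X t ω j - X 0 ω j) * (∫ s in (0:ℝ)..t, X s ω k)))) ∂μ)
          + ∫ ω, (∑ k, ∑ l, H i k * H j l
              * ((∫ s in (0:ℝ)..t, X s ω k) * (∫ s in (0:ℝ)..t, X s ω l))) ∂μ :=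
      integral_add ((intT1.add intT2).add intT3) intT4
    have s2 : ∫ ω, ((X t ω i * X t ω j - X t ω i * X 0 ω j - X 0 ω i * X t ω j
            + X 0 ω i * X 0 ω j)
          + (∑ l, H j l * ((X t ω i - X 0 ω i) * (∫ s in (0:ℝ)..t, X s ω l)))
          + (∑ k, H i k * ((X t ω j - X 0 ω j) * (∫ s in (0:ℝ)..t, X s ω k)))) ∂μ
        = (∫ ω, ((X t ω i * X t ω j - X t ω i * X 0 ω j - X 0 ω i * X t ω j
            + X 0 ω i * X 0 ω j)
          + (∑ l, H j l * ((X t ω i - X 0 ω i) * (∫ s in (0:ℝ)..t, X s ω l)))) ∂μ)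
          + ∫ ω, (∑ k, H i k * ((X t ω j - X 0 ω j) * (∫ s in (0:ℝ)..t, X s ω k))) ∂μ :=
      integral_add (intT1.add intT2) intT3
    have s3 : ∫ ω, ((X t ω i * X t ω j - X t ω i * X 0 ω j - X 0 ω i * X t ω j
            + X 0 ω i * X 0 ω j)
          + (∑ l, H j l * ((X t ω i - X 0 ω i) * (∫ s in (0:ℝ)..t, X s ω l)))) ∂μ
        = (∫ ω, (X t ω i * X t ω j - X t ω i * X 0 ω j - X 0 ω i * X t ω j
            + X 0 ω i * X 0 ω j) ∂μ)
          + ∫ ω, (∑ l, H j l * ((X t ω i - X 0 ω i) * (∫ s in (0:ℝ)..t, X s ω l))) ∂μ :=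
      integral_add intT1 intT2
    rw [hsplit, s1, s2, s3, hT1, hT2, hT3, hT4]
  -- final assembly
  ext i j
  have hDij : D t i j = v t i j - 2 * γ 0 i j + γ t i j + γ t j i := by
    rw [hD]
    simp only [Matrix.add_apply, Matrix.sub_apply, Matrix.smul_apply, Matrix.transpose_apply,
      smul_eq_mul]
  have hHCH : (H * C t * H) i j = ∑ k, ∑ l, H i k * H j l * C t k l := by
    rw [Matrix.mul_apply]
    simp only [Matrix.mul_apply, Finset.sum_mul]
    rw [Finset.sum_comm]
    refine Finset.sum_congr rfl fun k _ => ?_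
    refine Finset.sum_congr rfl fun l _ => ?_
    rw [hHsym j l]
    ring
  simp only [Matrix.add_apply, Matrix.sub_apply, Matrix.mul_apply, Matrix.transpose_apply,
    Matrix.zero_apply]
  rw [hDij, hvij i j]
  have hHCH' : ∑ l, (∑ k, H i k * C t k l) * H l j = ∑ k, ∑ l, H i k * H j l * C t k l := by
    rw [← hHCH, Matrix.mul_apply]
    refine Finset.sum_congr rfl fun l _ => ?_
    rw [Matrix.mul_apply]
  rw [hHCH']
  have e1 : ∑ k, B t k i * H k j = ∑ k, -(H j k * B t i k) := by
    refine Finset.sum_congr rfl fun k _ => ?_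
    rw [hBanti, hHsym k j]
    ring
  have e2 : ∑ k, H i k * B t k j = ∑ k, -(H i k * B t j k) := by
    refine Finset.sum_congr rfl fun k _ => ?_
    rw [hBanti j k]
    ring
  rw [e1, e2, Finset.sum_neg_distrib, Finset.sum_neg_distrib]
  ring
end
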